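/- arXiv:1010.1472 — 11 statements merged into one kernel-verified Lean document; each statement's English description precedes it below -/
import Mathlib

section
/- Let E be a real Banach space, μ > 0, ε > 0, and P : E × E → E a continuous bilinear map satisfying ‖P(f,g)‖ ≤ μ‖f‖‖g‖ for all f,g ∈ E. Let f₀ ∈ E with ‖f₀‖ ≤ 1 and define the Wild coefficients f_{k+1} = (1/(k+1)) ∑_{h=0}^{k} P(f_h, f_{k−h})/μ. For t ≥ 0 set τ(t) = 1 − e^{−μt/ε} and f(t) = (1 − τ(t)) ∑_{k=0}^{∞} τ(t)^k f_k. Then the series converges absolutely for every t ≥ 0, f(0) = f₀, and f is differentiable on (0,∞) with f′(t) = (1/ε)(P(f(t), f(t)) − μ f(t)) for all t > 0. -/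
set_option maxHeartbeats 1000000

open Finset

theorem bilinear_summable_prod' {E : Type*} [NormedAddCommGroup E] [NormedSpace ℝ E]
    [CompleteSpace E]
    (Pc : E →L[ℝ] E →L[ℝ] E) (a b : ℕ → E)
    (ha : Summable fun k => ‖a k‖) (hb : Summable fun k => ‖b k‖) :
    Summable fun p : ℕ × ℕ => Pc (a p.1) (b p.2) := by
  have h1 : 0 ≤ fun k : ℕ => ‖Pc‖ * ‖a k‖ := fun k => by positivity
  have h2 : 0 ≤ fun k : ℕ => ‖b k‖ := fun k => norm_nonneg _
  have hB : Summable fun p : ℕ × ℕ => (‖Pc‖ * ‖a p.1‖) * ‖b p.2‖ :=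
    (ha.mul_left ‖Pc‖).mul_of_nonneg hb h1 h2
  apply Summable.of_norm
  refine hB.of_nonneg_of_le (fun _ => norm_nonneg _) (fun p => ?_)
  calc ‖Pc (a p.1) (b p.2)‖ ≤ ‖Pc‖ * ‖a p.1‖ * ‖b p.2‖ := Pc.le_opNorm₂ _ _
  _ = (‖Pc‖ * ‖a p.1‖) * ‖b p.2‖ := by ring

theorem bilinear_cauchy' {E : Type*} [NormedAddCommGroup E] [NormedSpace ℝ E] [CompleteSpace E]
    (Pc : E →L[ℝ] E →L[ℝ] E) (a b : ℕ → E)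
    (ha : Summable fun k => ‖a k‖) (hb : Summable fun k => ‖b k‖) :
    Summable (fun n => ∑ h ∈ Finset.range (n+1), Pc (a h) (b (n-h))) ∧
    Pc (∑' k, a k) (∑' k, b k) = ∑' n, ∑ h ∈ Finset.range (n+1), Pc (a h) (b (n-h)) := by
  have hsa : Summable a := ha.of_norm
  have hsb : Summable b := hb.of_norm
  have hprod : Summable fun p : ℕ × ℕ => Pc (a p.1) (b p.2) :=
    bilinear_summable_prod' Pc a b ha hb
  have hswap : Summable fun p : ℕ × ℕ => Pc (a p.2) (b p.1) :=
    (bilinear_summable_prod' Pc a b ha hb).prod_symm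
  have hinner : ∀ l, Summable fun h => Pc (a h) (b l) := by
    intro l
    apply Summable.of_norm
    refine (ha.mul_left (‖Pc‖ * ‖b l‖)).of_nonneg_of_le (fun _ => norm_nonneg _) (fun h => ?_)
    calc ‖Pc (a h) (b l)‖ ≤ ‖Pc‖ * ‖a h‖ * ‖b l‖ := Pc.le_opNorm₂ _ _
    _ = ‖Pc‖ * ‖b l‖ * ‖a h‖ := by ring
  have h1 : Pc (∑' k, a k) (∑' k, b k) = ∑' l, ∑' h, Pc (a h) (b l) := by
    rw [(Pc (∑' k, a k)).map_tsum hsb]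
    congr 1
    funext l
    simpa using (Pc.flip (b l)).map_tsum hsa
  have h2 : ∑' l, ∑' h, Pc (a h) (b l) = ∑' p : ℕ × ℕ, Pc (a p.2) (b p.1) :=
    (Summable.tsum_prod' hswap fun l => hinner l).symm
  have h3 : ∑' p : ℕ × ℕ, Pc (a p.2) (b p.1)
      = ∑' p : ℕ × ℕ, Pc (a p.1) (b p.2) :=
    (Equiv.prodComm ℕ ℕ).tsum_eq fun p : ℕ × ℕ => Pc (a p.1) (b p.2)
  have hsig : Summable ((fun p : ℕ × ℕ => Pc (a p.1) (b p.2)) ∘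
      Finset.HasAntidiagonal.sigmaAntidiagonalEquivProd) :=
    (Finset.HasAntidiagonal.sigmaAntidiagonalEquivProd (A := ℕ)).summable_iff.2 hprod
  have key : ∀ n : ℕ, ∑ h ∈ Finset.range (n+1), Pc (a h) (b (n-h))
      = ∑ kl ∈ Finset.HasAntidiagonal.antidiagonal n, Pc (a kl.1) (b kl.2) :=
    fun n => (Finset.Nat.sum_antidiagonal_eq_sum_range_succ_mk
      (fun kl => Pc (a kl.1) (b kl.2)) n).symm
  constructor
  · have : Summable fun n : ℕ => ∑' c : (Finset.HasAntidiagonal.antidiagonal n : Finset (ℕ × ℕ)),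
        ((fun p : ℕ × ℕ => Pc (a p.1) (b p.2)) ∘ Finset.HasAntidiagonal.sigmaAntidiagonalEquivProd) ⟨n, c⟩ :=
      hsig.sigma' fun n => (hasSum_fintype _).summable
    refine this.congr fun n => ?_
    rw [key n, ← Finset.sum_finset_coe, ← tsum_fintype (L := .unconditional _)]
    rfl
  · rw [h1, h2, h3]
    rw [← (Finset.HasAntidiagonal.sigmaAntidiagonalEquivProd (A := ℕ)).tsum_eq
      (fun p : ℕ × ℕ => Pc (a p.1) (b p.2))]
    refine Eq.trans (Summable.tsum_sigma' (fun n => (hasSum_fintype _).summable) hsig) ?_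
    congr 1
    funext n
    rw [key n, ← Finset.sum_finset_coe, ← tsum_fintype (L := .unconditional _)]
    rfl

theorem summable_nat_mul_pow_pred' {q : ℝ} (h0 : 0 < q) (h1 : q < 1) :
    Summable fun k : ℕ => (k : ℝ) * q ^ (k - 1) := by
  have hq : ‖q‖ < 1 := by rw [Real.norm_eq_abs, abs_of_pos h0]; exact h1
  have h := (summable_pow_mul_geometric_of_norm_lt_one 1 hq).mul_left q⁻¹
  refine h.congr fun k => ?_
  cases k with
  | zero => simp
  | succ k =>
    have hqne : q ≠ 0 := ne_of_gt h0
    simp only [pow_one, Nat.add_sub_cancel, pow_succ]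
    field_simp

/-- the Wild expansion `f(t) = (1-τ)∑ τ^k f_k`, `τ = 1 - e^{-μt/ε}`,
converges absolutely, matches the initial data, and solves
`f' = (1/ε)(P(f,f) - μ f)` for `t > 0`. -/
theorem wild_expansion_solves_relaxation_equation
    {E : Type*} [NormedAddCommGroup E] [NormedSpace ℝ E] [CompleteSpace E]
    (μ ε : ℝ) (hμ : 0 < μ) (hε : 0 < ε)
    (P : E →ₗ[ℝ] E →ₗ[ℝ] E) (hP : ∀ f g : E, ‖P f g‖ ≤ μ * ‖f‖ * ‖g‖)
    (f₀ : E) (hf₀ : ‖f₀‖ ≤ 1)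
    (F : ℕ → E) (hF0 : F 0 = f₀)
    (hFrec : ∀ k : ℕ, F (k + 1) =
      (1 / ((k : ℝ) + 1)) • ∑ h ∈ Finset.range (k + 1), μ⁻¹ • P (F h) (F (k - h)))
    (τ : ℝ → ℝ) (hτ : ∀ t, τ t = 1 - Real.exp (-(μ * t / ε)))
    (f : ℝ → E) (hf : ∀ t, f t = (1 - τ t) • ∑' k : ℕ, τ t ^ k • F k) :
    (∀ t : ℝ, 0 ≤ t → Summable fun k : ℕ => ‖τ t ^ k • F k‖) ∧
    f 0 = f₀ ∧
    (∀ t : ℝ, 0 < t →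
      HasDerivAt f ((1 / ε) • (P (f t) (f t) - μ • f t)) t) := by
  have hμ' : (0:ℝ) < μ⁻¹ := inv_pos.2 hμ
  have hA : (0:ℝ) < μ / ε := div_pos hμ hε
  -- ‖F k‖ ≤ 1
  have hFk : ∀ k, ‖F k‖ ≤ 1 := by
    intro k
    induction k using Nat.strong_induction_on with
    | _ k ih =>
      cases k with
      | zero => rw [hF0]; exact hf₀
      | succ k =>
        rw [hFrec k, norm_smul]
        have hbound : ‖∑ h ∈ Finset.range (k+1), μ⁻¹ • P (F h) (F (k - h))‖ ≤ (k:ℝ)+1 := by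
          calc ‖∑ h ∈ Finset.range (k+1), μ⁻¹ • P (F h) (F (k-h))‖
              ≤ ∑ h ∈ Finset.range (k+1), ‖μ⁻¹ • P (F h) (F (k-h))‖ := norm_sum_le _ _
            _ ≤ ∑ _h ∈ Finset.range (k+1), (1:ℝ) := by
                apply Finset.sum_le_sum
                intro h hh
                rw [norm_smul, Real.norm_eq_abs, abs_of_pos hμ']
                have h1 : ‖F h‖ ≤ 1 := ih h (by
                  have := Finset.mem_range.mp hh; omega)
                have h2 : ‖F (k-h)‖ ≤ 1 := ih (k-h) (by omega)
                calc μ⁻¹ * ‖P (F h) (F (k-h))‖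
                    ≤ μ⁻¹ * (μ * ‖F h‖ * ‖F (k-h)‖) :=
                      mul_le_mul_of_nonneg_left (hP _ _) hμ'.le
                  _ ≤ μ⁻¹ * (μ * 1 * 1) := by
                      apply mul_le_mul_of_nonneg_left _ hμ'.le
                      nlinarith [hμ, norm_nonneg (F h), norm_nonneg (F (k-h)), mul_le_one₀ h1 (norm_nonneg (F (k-h))) h2]
                  _ = 1 := by field_simp
            _ = (k:ℝ)+1 := by simp
        rw [Real.norm_eq_abs]
        have hpos : (0:ℝ) < 1/((k:ℝ)+1) := by positivity
        rw [abs_of_pos hpos]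
        calc 1/((k:ℝ)+1) * ‖∑ h ∈ Finset.range (k+1), μ⁻¹ • P (F h) (F (k-h))‖
            ≤ 1/((k:ℝ)+1) * ((k:ℝ)+1) := mul_le_mul_of_nonneg_left hbound hpos.le
          _ = 1 := by field_simp
  -- τ basic facts
  have hτlt : ∀ t : ℝ, τ t < 1 := fun t => by
    rw [hτ]; have := Real.exp_pos (-(μ*t/ε)); linarith
  have hτ0 : ∀ t : ℝ, 0 ≤ t → 0 ≤ τ t := by
    intro t ht
    rw [hτ]
    have h1 : -(μ*t/ε) ≤ 0 := by
      have : 0 ≤ μ*t/ε := by positivity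
      linarith
    have := Real.exp_le_exp.mpr h1
    rw [Real.exp_zero] at this
    linarith
  have part1 : ∀ t : ℝ, 0 ≤ t → Summable fun k : ℕ => ‖τ t ^ k • F k‖ := by
    intro t ht
    refine (summable_geometric_of_lt_one (hτ0 t ht) (hτlt t)).of_nonneg_of_le
      (fun _ => norm_nonneg _) (fun k => ?_)
    rw [norm_smul, norm_pow, Real.norm_eq_abs, abs_of_nonneg (hτ0 t ht)]
    calc τ t ^ k * ‖F k‖ ≤ τ t ^ k * 1 :=
          mul_le_mul_of_nonneg_left (hFk k) (pow_nonneg (hτ0 t ht) k)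
      _ = τ t ^ k := mul_one _
  have part2 : f 0 = f₀ := by
    have h0 : τ 0 = 0 := by rw [hτ]; simp
    rw [hf, h0]
    rw [tsum_eq_single 0 (fun k hk => by simp [zero_pow hk])]
    simp [hF0]
  refine ⟨part1, part2, ?_⟩
  intro t ht
  set Pc : E →L[ℝ] E →L[ℝ] E := LinearMap.mkContinuous₂ P μ hP with hPcdef
  set g : ℕ → ℝ → E := fun k x =>
    (Real.exp (-(μ*x/ε)) * (1 - Real.exp (-(μ*x/ε)))^k) • F k with hg
  set g' : ℕ → ℝ → E := fun k x =>
    (((-(μ/ε)) * Real.exp (-(μ*x/ε))) * (1 - Real.exp (-(μ*x/ε)))^k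
      + Real.exp (-(μ*x/ε)) * ((k:ℝ) * (1 - Real.exp (-(μ*x/ε)))^(k-1)
        * ((μ/ε) * Real.exp (-(μ*x/ε))))) • F k with hg'
  have hderiv : ∀ (k : ℕ) (x : ℝ), HasDerivAt (g k) (g' k x) x := by
    intro k x
    have he : HasDerivAt (fun x => Real.exp (-(μ*x/ε)))
        ((-(μ/ε)) * Real.exp (-(μ*x/ε))) x := by
      have h1 : HasDerivAt (fun x : ℝ => μ*x/ε) (μ/ε) x := by
        simpa using ((hasDerivAt_id x).const_mul μ).div_const ε
      have h0 : HasDerivAt (fun x : ℝ => -(μ*x/ε)) (-(μ/ε)) x := h1.neg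
      have := h0.exp
      convert this using 1
      ring
    have hp : HasDerivAt (fun x => (1 - Real.exp (-(μ*x/ε)))^k)
        ((k:ℝ) * (1 - Real.exp (-(μ*x/ε)))^(k-1) * ((μ/ε) * Real.exp (-(μ*x/ε)))) x := by
      have h1 : HasDerivAt (fun x => 1 - Real.exp (-(μ*x/ε)))
          ((μ/ε) * Real.exp (-(μ*x/ε))) x := by
        exact (he.const_sub 1).congr_deriv (by ring)
      exact h1.pow k
    exact (he.mul hp).smul_const (F k)
  set r : ℝ := 1 - Real.exp (-(μ*(t+1)/ε)) with hrdef
  have hr0 : 0 < r := by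
    have h1 : Real.exp (-(μ*(t+1)/ε)) < 1 := by
      have h2 : Real.exp (-(μ*(t+1)/ε)) < Real.exp 0 := by
        apply Real.exp_lt_exp.mpr
        have : 0 < μ*(t+1)/ε := by positivity
        linarith
      simpa using h2
    rw [hrdef]; linarith
  have hr1 : r < 1 := by
    rw [hrdef]; have := Real.exp_pos (-(μ*(t+1)/ε)); linarith
  have hx_facts : ∀ x : ℝ, x ∈ Set.Ioo (0:ℝ) (t+1) →
      0 < Real.exp (-(μ*x/ε)) ∧ Real.exp (-(μ*x/ε)) ≤ 1 ∧
      0 ≤ 1 - Real.exp (-(μ*x/ε)) ∧ 1 - Real.exp (-(μ*x/ε)) ≤ r := by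
    intro x hx
    obtain ⟨hx0, hx1⟩ := hx
    have he1 : Real.exp (-(μ*x/ε)) ≤ 1 := by
      have h2 : Real.exp (-(μ*x/ε)) ≤ Real.exp 0 := by
        apply Real.exp_le_exp.mpr
        have : 0 ≤ μ*x/ε := by positivity
        linarith
      simpa using h2
    have heτ : 1 - Real.exp (-(μ*x/ε)) ≤ r := by
      have h2 : Real.exp (-(μ*(t+1)/ε)) ≤ Real.exp (-(μ*x/ε)) := by
        apply Real.exp_le_exp.mpr
        have h3 : μ*x/ε ≤ μ*(t+1)/ε := by
          gcongr
          all_goals linarith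
        linarith
      rw [hrdef]; linarith
    have he0 : 0 < Real.exp (-(μ*x/ε)) := Real.exp_pos _
    exact ⟨he0, he1, by linarith, heτ⟩
  set u : ℕ → ℝ := fun k => (μ/ε) * r^k + (μ/ε) * ((k:ℝ) * r^(k-1)) with hu
  have hu_sum : Summable u := by
    apply Summable.add
    · exact (summable_geometric_of_lt_one hr0.le hr1).mul_left _
    · exact (summable_nat_mul_pow_pred' hr0 hr1).mul_left _
  have hbound : ∀ (k : ℕ) (x : ℝ), x ∈ Set.Ioo (0:ℝ) (t+1) → ‖g' k x‖ ≤ u k := by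
    intro k x hx
    obtain ⟨he0, he1, hτx0, hτxr⟩ := hx_facts x hx
    have hwk : (1 - Real.exp (-(μ*x/ε)))^k ≤ r^k := pow_le_pow_left₀ hτx0 hτxr k
    have hwk1 : (1 - Real.exp (-(μ*x/ε)))^(k-1) ≤ r^(k-1) := pow_le_pow_left₀ hτx0 hτxr (k-1)
    have hwk0 : 0 ≤ (1 - Real.exp (-(μ*x/ε)))^k := pow_nonneg hτx0 k
    have hwk10 : 0 ≤ (1 - Real.exp (-(μ*x/ε)))^(k-1) := pow_nonneg hτx0 (k-1)
    have hrk0 : (0:ℝ) ≤ r^k := pow_nonneg hr0.le k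
    have hrk10 : (0:ℝ) ≤ r^(k-1) := pow_nonneg hr0.le (k-1)
    simp only [hg']
    rw [norm_smul, Real.norm_eq_abs]
    have h1 : |((-(μ/ε)) * Real.exp (-(μ*x/ε))) * (1 - Real.exp (-(μ*x/ε)))^k|
        ≤ (μ/ε) * r^k := by
      rw [abs_mul, abs_mul, abs_neg, abs_of_pos hA, abs_of_pos he0, abs_of_nonneg hwk0]
      calc μ/ε * Real.exp (-(μ*x/ε)) * (1 - Real.exp (-(μ*x/ε)))^k
          ≤ μ/ε * 1 * r^k := by
            apply mul_le_mul (mul_le_mul_of_nonneg_left he1 hA.le) hwk hwk0 (by positivity)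
        _ = μ/ε * r^k := by ring
    have h2 : |Real.exp (-(μ*x/ε)) * ((k:ℝ) * (1 - Real.exp (-(μ*x/ε)))^(k-1)
        * ((μ/ε) * Real.exp (-(μ*x/ε))))| ≤ (μ/ε) * ((k:ℝ) * r^(k-1)) := by
      have hnn : 0 ≤ Real.exp (-(μ*x/ε)) * ((k:ℝ) * (1 - Real.exp (-(μ*x/ε)))^(k-1)
          * ((μ/ε) * Real.exp (-(μ*x/ε)))) := by
        apply mul_nonneg he0.le
        apply mul_nonneg (mul_nonneg (Nat.cast_nonneg k) hwk10)
        exact mul_nonneg hA.le he0.le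
      rw [abs_of_nonneg hnn]
      have hee : Real.exp (-(μ*x/ε)) * Real.exp (-(μ*x/ε)) ≤ 1 := by nlinarith
      calc Real.exp (-(μ*x/ε)) * ((k:ℝ) * (1 - Real.exp (-(μ*x/ε)))^(k-1)
            * ((μ/ε) * Real.exp (-(μ*x/ε))))
          = (μ/ε) * ((k:ℝ) * (1 - Real.exp (-(μ*x/ε)))^(k-1))
            * (Real.exp (-(μ*x/ε)) * Real.exp (-(μ*x/ε))) := by ring
        _ ≤ (μ/ε) * ((k:ℝ) * r^(k-1)) * 1 := by
            apply mul_le_mul _ hee (by positivity)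
              (mul_nonneg hA.le (mul_nonneg (Nat.cast_nonneg k) hrk10))
            apply mul_le_mul_of_nonneg_left _ hA.le
            exact mul_le_mul_of_nonneg_left hwk1 (Nat.cast_nonneg k)
        _ = (μ/ε) * ((k:ℝ) * r^(k-1)) := by ring
    have habs := (abs_add_le _ _).trans (add_le_add h1 h2)
    calc |((-(μ/ε)) * Real.exp (-(μ*x/ε))) * (1 - Real.exp (-(μ*x/ε)))^k
          + Real.exp (-(μ*x/ε)) * ((k:ℝ) * (1 - Real.exp (-(μ*x/ε)))^(k-1)
            * ((μ/ε) * Real.exp (-(μ*x/ε))))| * ‖F k‖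
        ≤ u k * 1 := by
          apply mul_le_mul habs (hFk k) (norm_nonneg _)
          exact add_nonneg (mul_nonneg hA.le hrk0)
            (mul_nonneg hA.le (mul_nonneg (Nat.cast_nonneg k) hrk10))
      _ = u k := mul_one _
  have hmem : t ∈ Set.Ioo (0:ℝ) (t+1) := ⟨ht, by linarith⟩
  have het1 : Real.exp (-(μ*t/ε)) ≤ 1 := (hx_facts t hmem).2.1
  have hg0 : Summable fun k => g k t := by
    apply Summable.of_norm
    refine (part1 t ht.le).of_nonneg_of_le (fun _ => norm_nonneg _) (fun k => ?_)
    simp only [hg]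
    rw [norm_smul, norm_smul, Real.norm_eq_abs, ← hτ t]
    apply mul_le_mul_of_nonneg_right _ (norm_nonneg _)
    rw [abs_mul]
    calc |Real.exp (-(μ*t/ε))| * |τ t ^ k| ≤ 1 * |τ t ^ k| := by
          apply mul_le_mul_of_nonneg_right _ (abs_nonneg _)
          rw [abs_of_pos (Real.exp_pos _)]; exact het1
      _ = ‖τ t ^ k‖ := by rw [one_mul, Real.norm_eq_abs]
  have main : HasDerivAt (fun y => ∑' k, g k y) (∑' k, g' k t) t :=
    hasDerivAt_tsum_of_isPreconnected hu_sum isOpen_Ioo isPreconnected_Ioo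
      (fun k y _ => hderiv k y) hbound hmem hg0 hmem
  -- identify the sum of the series with f
  have hfg : (fun y => ∑' k, g k y) = f := by
    funext y
    rw [hf y, hτ y, sub_sub_cancel]
    by_cases hsum : Summable fun k : ℕ => (1 - Real.exp (-(μ*y/ε)))^k • F k
    · rw [← Summable.tsum_const_smul (Real.exp (-(μ*y/ε))) hsum]
      exact tsum_congr fun k => by simp only [hg, smul_smul]
    · rw [tsum_eq_zero_of_not_summable hsum, smul_zero]
      apply tsum_eq_zero_of_not_summable
      intro hcon
      apply hsum
      have h2 := hcon.const_smul (Real.exp (-(μ*y/ε)))⁻¹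
      refine h2.congr fun k => ?_
      simp only [hg, smul_smul]
      congr 1
      rw [← mul_assoc, inv_mul_cancel₀ (Real.exp_ne_zero _), one_mul]
  have key : HasDerivAt f (∑' k, g' k t) t := hfg ▸ main
  -- now identify the value of the derivative
  have hq0 : 0 < τ t := by
    have h2 : Real.exp (-(μ*t/ε)) < Real.exp 0 := by
      apply Real.exp_lt_exp.mpr
      have : 0 < μ*t/ε := by positivity
      linarith
    rw [Real.exp_zero] at h2
    rw [hτ]; linarith
  have hSnorm := part1 t ht.le
  have hS : Summable fun k : ℕ => τ t ^ k • F k := hSnorm.of_norm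
  have hT : Summable fun k : ℕ => ((k:ℝ) * τ t ^ (k-1)) • F k := by
    apply Summable.of_norm
    refine (summable_nat_mul_pow_pred' hq0 (hτlt t)).of_nonneg_of_le
      (fun _ => norm_nonneg _) (fun k => ?_)
    rw [norm_smul, Real.norm_eq_abs,
      abs_of_nonneg (mul_nonneg (Nat.cast_nonneg k) (pow_nonneg hq0.le _))]
    calc (k:ℝ) * τ t ^ (k-1) * ‖F k‖ ≤ (k:ℝ) * τ t ^ (k-1) * 1 :=
          mul_le_mul_of_nonneg_left (hFk k)
            (mul_nonneg (Nat.cast_nonneg k) (pow_nonneg hq0.le _))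
      _ = (k:ℝ) * τ t ^ (k-1) := mul_one _
  have hterm : ∀ k : ℕ, g' k t = ((-(μ/ε)) * Real.exp (-(μ*t/ε))) • (τ t ^ k • F k)
      + ((μ/ε) * (Real.exp (-(μ*t/ε)) * Real.exp (-(μ*t/ε)))) •
        (((k:ℝ) * τ t ^ (k-1)) • F k) := by
    intro k
    simp only [hg']
    rw [hτ t, smul_smul, smul_smul, ← add_smul]
    congr 1
    ring
  have hsplit : ∑' k, g' k t = ((-(μ/ε)) * Real.exp (-(μ*t/ε))) • (∑' k, τ t ^ k • F k)
      + ((μ/ε) * (Real.exp (-(μ*t/ε)) * Real.exp (-(μ*t/ε)))) •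
        (∑' k : ℕ, ((k:ℝ) * τ t ^ (k-1)) • F k) := by
    rw [tsum_congr hterm, Summable.tsum_add (hS.const_smul _) (hT.const_smul _),
      Summable.tsum_const_smul _ hS, Summable.tsum_const_smul _ hT]
  -- Cauchy product
  obtain ⟨hCsum, hPSS⟩ := bilinear_cauchy' Pc (fun k => τ t ^ k • F k)
    (fun k => τ t ^ k • F k) hSnorm hSnorm
  have hsimp : ∀ n : ℕ, ∑ h ∈ Finset.range (n+1), Pc (τ t ^ h • F h) (τ t ^ (n-h) • F (n-h))
      = τ t ^ n • ∑ h ∈ Finset.range (n+1), Pc (F h) (F (n-h)) := by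
    intro n
    rw [Finset.smul_sum]
    apply Finset.sum_congr rfl
    intro h hh
    have hhn : h ≤ n := Nat.lt_succ_iff.mp (Finset.mem_range.mp hh)
    simp only [map_smul, ContinuousLinearMap.smul_apply, smul_smul]
    congr 1
    rw [← pow_add]
    congr 1
    omega
  have hQsum : Summable fun n : ℕ =>
      τ t ^ n • ∑ h ∈ Finset.range (n+1), Pc (F h) (F (n-h)) := hCsum.congr hsimp
  have hPSS' : Pc (∑' k, τ t ^ k • F k) (∑' k, τ t ^ k • F k)
      = ∑' n : ℕ, τ t ^ n • ∑ h ∈ Finset.range (n+1), Pc (F h) (F (n-h)) := by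
    rw [hPSS]; exact tsum_congr hsimp
  have hTval : ∑' k : ℕ, ((k:ℝ) * τ t ^ (k-1)) • F k
      = μ⁻¹ • Pc (∑' k, τ t ^ k • F k) (∑' k, τ t ^ k • F k) := by
    rw [Summable.tsum_eq_zero_add hT]
    simp only [Nat.cast_zero, zero_mul, zero_smul, zero_add]
    have hterm2 : ∀ j : ℕ, (((j+1:ℕ):ℝ) * τ t ^ ((j+1)-1)) • F (j+1)
        = μ⁻¹ • (τ t ^ j • ∑ h ∈ Finset.range (j+1), Pc (F h) (F (j-h))) := by
      intro j
      rw [hFrec j, smul_smul]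
      have hj : ((j+1:ℕ):ℝ) * τ t ^ (j+1-1) * (1/((j:ℝ)+1)) = τ t ^ j := by
        have hne : (j:ℝ)+1 ≠ 0 := by positivity
        push_cast
        field_simp
      rw [hj, ← Finset.smul_sum, smul_comm]
      rfl
    rw [tsum_congr hterm2, Summable.tsum_const_smul _ hQsum, hPSS']
  have hft : f t = Real.exp (-(μ*t/ε)) • (∑' k, τ t ^ k • F k) := by
    rw [hf t]
    congr 1
    rw [hτ t, sub_sub_cancel]
  have hval : (∑' k, g' k t) = (1/ε) • (P (f t) (f t) - μ • f t) := by
    rw [hsplit, hTval, hft]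
    have hPbil : P (Real.exp (-(μ*t/ε)) • (∑' k, τ t ^ k • F k))
        (Real.exp (-(μ*t/ε)) • (∑' k, τ t ^ k • F k))
        = (Real.exp (-(μ*t/ε)) * Real.exp (-(μ*t/ε))) •
          P (∑' k, τ t ^ k • F k) (∑' k, τ t ^ k • F k) := by
      simp only [map_smul, LinearMap.smul_apply, smul_smul]
    rw [hPbil]
    have hPceq : Pc (∑' k, τ t ^ k • F k) (∑' k, τ t ^ k • F k)
        = P (∑' k, τ t ^ k • F k) (∑' k, τ t ^ k • F k) := rfl
    rw [hPceq, smul_sub, smul_smul, smul_smul, smul_smul, smul_smul]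
    match_scalars
    all_goals field_simp
    all_goals ring
  exact hval ▸ key
end

section
/- Consider the abstract exponential Runge–Kutta scheme with a μ-Lipschitz map 𝒫. Let f⁰, g⁰ ∈ E, and let (F⁽ⁱ⁾, f¹) and (G⁽ⁱ⁾, g¹) be the stages and updates produced by the scheme from f⁰ and g⁰ respectively, using the same coefficients c, A(λ), W(λ) and the same element M. Then ‖f¹ − g¹‖ ≤ R(λ) ‖f⁰ − g⁰‖. In particular, if R(λ) ≤ 1 then the scheme is contractive: ‖f¹ − g¹‖ ≤ ‖f⁰ − g⁰‖. -/
open Matrix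

/-- contractivity of the abstract exponential Runge–Kutta scheme,
`‖f¹ - g¹‖ ≤ R(λ) ‖f⁰ - g⁰‖`, with
`R(λ) = e^{-λ} + ∑_{k=0}^{ν-1} λ^{k+1} w̄ᵀ Ā^k Ē ē`. -/
theorem expRK_contractivity
    {E : Type*} [NormedAddCommGroup E] [NormedSpace ℝ E]
    (ν : ℕ) (hν : 1 ≤ ν) (lam : ℝ) (hlam : 0 ≤ lam)
    (c : Fin ν → ℝ) (hc : ∀ i, 0 ≤ c i)
    (A : Matrix (Fin ν) (Fin ν) ℝ) (hA : ∀ i j : Fin ν, i ≤ j → A i j = 0)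
    (W : Fin ν → ℝ) (μ : ℝ) (hμ : 0 < μ) (M : E)
    (P : E → E) (hP : ∀ f g : E, ‖P f - P g‖ ≤ μ * ‖f - g‖)
    (f0 g0 : E) (F G : Fin ν → E) (f1 g1 : E)
    (hF : ∀ i, F i = Real.exp (-(c i * lam)) • f0
      + lam • ∑ j ∈ Finset.Iio i, A i j • (μ⁻¹ • P (F j) - M)
      + (1 - Real.exp (-(c i * lam))) • M)
    (hG : ∀ i, G i = Real.exp (-(c i * lam)) • g0
      + lam • ∑ j ∈ Finset.Iio i, A i j • (μ⁻¹ • P (G j) - M)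
      + (1 - Real.exp (-(c i * lam))) • M)
    (hf1 : f1 = Real.exp (-lam) • f0
      + lam • ∑ i, W i • (μ⁻¹ • P (F i) - M) + (1 - Real.exp (-lam)) • M)
    (hg1 : g1 = Real.exp (-lam) • g0
      + lam • ∑ i, W i • (μ⁻¹ • P (G i) - M) + (1 - Real.exp (-lam)) • M) :
    ‖f1 - g1‖ ≤
      (Real.exp (-lam) + ∑ k ∈ Finset.range ν, lam ^ (k + 1) *
        ((fun i => |W i|) ⬝ᵥ (((A.map fun x => |x|) ^ k *
          Matrix.diagonal fun i => Real.exp (-(c i * lam))) *ᵥ fun _ => 1))) * ‖f0 - g0‖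
    ∧ ((Real.exp (-lam) + ∑ k ∈ Finset.range ν, lam ^ (k + 1) *
        ((fun i => |W i|) ⬝ᵥ (((A.map fun x => |x|) ^ k *
          Matrix.diagonal fun i => Real.exp (-(c i * lam))) *ᵥ fun _ => 1))) ≤ 1 →
        ‖f1 - g1‖ ≤ ‖f0 - g0‖) := by
  set δ := ‖f0 - g0‖ with hδ
  set Ab : Matrix (Fin ν) (Fin ν) ℝ := A.map fun x => |x| with hAbdef
  have hAb0 : ∀ i j : Fin ν, i ≤ j → Ab i j = 0 := by
    intro i j h
    simp [hAbdef, Matrix.map_apply, hA i j h]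
  have hAbnn : ∀ i j, 0 ≤ Ab i j := fun i j => abs_nonneg _
  -- the vectors v k = Ā^k Ē ē
  set v : ℕ → Fin ν → ℝ := fun k =>
    ((Ab ^ k) * Matrix.diagonal fun i => Real.exp (-(c i * lam))) *ᵥ fun _ => 1 with hvdef
  have hv0 : ∀ i, v 0 i = Real.exp (-(c i * lam)) := by
    intro i
    simp [hvdef, Matrix.mulVec_diagonal]
  have hvsucc : ∀ k i, v (k + 1) i = ∑ j, Ab i j * v k j := by
    intro k i
    have : v (k + 1) = Ab *ᵥ v k := by
      rw [hvdef]
      simp only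
      rw [Matrix.mulVec_mulVec, ← Matrix.mul_assoc, ← pow_succ']
    rw [this]
    simp [Matrix.mulVec, dotProduct]
  -- nilpotency of Ā
  have hnil : ∀ k, ∀ i j : Fin ν, (i : ℕ) < (j : ℕ) + k → (Ab ^ k) i j = 0 := by
    intro k
    induction k with
    | zero =>
      intro i j h
      rw [pow_zero]
      exact Matrix.one_apply_ne (by rintro rfl; omega)
    | succ k ih =>
      intro i j h
      rw [pow_succ', Matrix.mul_apply]
      apply Finset.sum_eq_zero
      intro l _
      by_cases hl : i ≤ l
      · rw [hAb0 i l hl, zero_mul]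
      · push_neg at hl
        rw [ih l j (by omega), mul_zero]
  have hvν : v ν = 0 := by
    have : Ab ^ ν = 0 := by
      ext i j
      exact hnil ν i j (by omega)
    simp [hvdef, this, Matrix.zero_mulVec]
  -- the stage amplification factors
  set S : Fin ν → ℝ := fun i => ∑ k ∈ Finset.range ν, lam ^ k * v k i with hS
  have hSrec : ∀ i, S i = Real.exp (-(c i * lam)) + lam * ∑ j, Ab i j * S j := by
    intro i
    have h1 : lam * ∑ j, Ab i j * S j
        = ∑ k ∈ Finset.range ν, lam ^ (k + 1) * v (k + 1) i := by
      rw [hS]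
      simp only [Finset.mul_sum]
      rw [Finset.sum_comm]
      refine Finset.sum_congr rfl fun k _ => ?_
      rw [hvsucc k i, Finset.mul_sum]
      refine Finset.sum_congr rfl fun j _ => ?_
      ring
    obtain ⟨m, hm⟩ : ∃ m, ν = m + 1 := ⟨ν - 1, by omega⟩
    have hv' : v (m + 1) i = 0 := by rw [← hm, hvν]; rfl
    rw [h1, show S i = ∑ k ∈ Finset.range ν, lam ^ k * v k i from rfl, hm,
      Finset.sum_range_succ' (fun k => lam ^ k * v k i) m,
      Finset.sum_range_succ (fun k => lam ^ (k + 1) * v (k + 1) i) m, hv']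
    simp only [pow_zero, one_mul, hv0, mul_zero, add_zero]
    ring
  -- stage difference bound by strong induction
  have hstage : ∀ i : Fin ν, ‖F i - G i‖ ≤ S i * δ := by
    have H : ∀ m : ℕ, ∀ i : Fin ν, (i : ℕ) < m → ‖F i - G i‖ ≤ S i * δ := by
      intro m
      induction m with
      | zero => intro i hi; omega
      | succ m ihm =>
        intro i _
        have ih : ∀ j : Fin ν, j < i → ‖F j - G j‖ ≤ S j * δ := by
          intro j hj; exact ihm j (by omega)
        have hdiff : F i - G i = Real.exp (-(c i * lam)) • (f0 - g0)
            + lam • ∑ j ∈ Finset.Iio i, A i j • (μ⁻¹ • (P (F j) - P (G j))) := by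
          rw [hF i, hG i]
          have hsum : ∑ j ∈ Finset.Iio i, A i j • (μ⁻¹ • P (F j) - M)
              - ∑ j ∈ Finset.Iio i, A i j • (μ⁻¹ • P (G j) - M)
              = ∑ j ∈ Finset.Iio i, A i j • (μ⁻¹ • (P (F j) - P (G j))) := by
            rw [← Finset.sum_sub_distrib]
            refine Finset.sum_congr rfl fun j _ => ?_
            rw [← smul_sub]
            congr 1
            rw [smul_sub]
            abel
          rw [smul_sub, ← hsum, smul_sub]
          abel
        have hterm : ∀ j ∈ Finset.Iio i,
            ‖A i j • (μ⁻¹ • (P (F j) - P (G j)))‖ ≤ Ab i j * (S j * δ) := by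
          intro j hj
          have hj' : j < i := Finset.mem_Iio.mp hj
          have h1 : ‖μ⁻¹ • (P (F j) - P (G j))‖ ≤ ‖F j - G j‖ := by
            rw [norm_smul, Real.norm_eq_abs, abs_of_nonneg (by positivity)]
            calc μ⁻¹ * ‖P (F j) - P (G j)‖ ≤ μ⁻¹ * (μ * ‖F j - G j‖) := by
                  exact mul_le_mul_of_nonneg_left (hP _ _) (by positivity)
              _ = ‖F j - G j‖ := by field_simp
          rw [norm_smul, Real.norm_eq_abs]
          calc |A i j| * ‖μ⁻¹ • (P (F j) - P (G j))‖
              ≤ |A i j| * ‖F j - G j‖ := by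
                exact mul_le_mul_of_nonneg_left h1 (abs_nonneg _)
            _ ≤ |A i j| * (S j * δ) := by
                exact mul_le_mul_of_nonneg_left (ih j hj') (abs_nonneg _)
            _ = Ab i j * (S j * δ) := by simp [hAbdef]
        calc ‖F i - G i‖
            ≤ ‖Real.exp (-(c i * lam)) • (f0 - g0)‖
              + ‖lam • ∑ j ∈ Finset.Iio i, A i j • (μ⁻¹ • (P (F j) - P (G j)))‖ := by
              rw [hdiff]; exact norm_add_le _ _
          _ ≤ Real.exp (-(c i * lam)) * δ
              + lam * ∑ j ∈ Finset.Iio i, Ab i j * (S j * δ) := by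
              gcongr
              · rw [norm_smul, Real.norm_eq_abs, abs_of_pos (Real.exp_pos _)]
              · rw [norm_smul, Real.norm_eq_abs, abs_of_nonneg hlam]
                exact mul_le_mul_of_nonneg_left
                  ((norm_sum_le _ _).trans (Finset.sum_le_sum hterm)) hlam
          _ = Real.exp (-(c i * lam)) * δ
              + lam * ∑ j, Ab i j * (S j * δ) := by
              congr 1
              congr 1
              refine Finset.sum_subset (Finset.subset_univ _) ?_
              intro j _ hj
              have hij : i ≤ j := le_of_not_gt (by simpa [Finset.mem_Iio] using hj)
              rw [hAb0 i j hij, zero_mul]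
          _ = S i * δ := by
              rw [hSrec i, Finset.mul_sum]
              rw [add_mul, Finset.mul_sum, Finset.sum_mul]
              congr 1
              refine Finset.sum_congr rfl fun j _ => ?_
              ring
    exact fun i => H (i + 1) i (by omega)
  -- the final bound
  have hdiff1 : f1 - g1 = Real.exp (-lam) • (f0 - g0)
      + lam • ∑ i, W i • (μ⁻¹ • (P (F i) - P (G i))) := by
    rw [hf1, hg1]
    have hsum : ∑ i, W i • (μ⁻¹ • P (F i) - M) - ∑ i, W i • (μ⁻¹ • P (G i) - M)
        = ∑ i, W i • (μ⁻¹ • (P (F i) - P (G i))) := by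
      rw [← Finset.sum_sub_distrib]
      refine Finset.sum_congr rfl fun i _ => ?_
      rw [← smul_sub]
      congr 1
      rw [smul_sub]
      abel
    rw [smul_sub, ← hsum, smul_sub]
    abel
  have hterm1 : ∀ i : Fin ν, ‖W i • (μ⁻¹ • (P (F i) - P (G i)))‖ ≤ |W i| * (S i * δ) := by
    intro i
    have h1 : ‖μ⁻¹ • (P (F i) - P (G i))‖ ≤ ‖F i - G i‖ := by
      rw [norm_smul, Real.norm_eq_abs, abs_of_nonneg (by positivity)]
      calc μ⁻¹ * ‖P (F i) - P (G i)‖ ≤ μ⁻¹ * (μ * ‖F i - G i‖) :=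
            mul_le_mul_of_nonneg_left (hP _ _) (by positivity)
        _ = ‖F i - G i‖ := by field_simp
    rw [norm_smul, Real.norm_eq_abs]
    calc |W i| * ‖μ⁻¹ • (P (F i) - P (G i))‖
        ≤ |W i| * ‖F i - G i‖ := mul_le_mul_of_nonneg_left h1 (abs_nonneg _)
      _ ≤ |W i| * (S i * δ) := mul_le_mul_of_nonneg_left (hstage i) (abs_nonneg _)
  have hmain : ‖f1 - g1‖ ≤
      (Real.exp (-lam) + ∑ k ∈ Finset.range ν, lam ^ (k + 1) *
        ((fun i => |W i|) ⬝ᵥ v k)) * δ := by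
    have hb : ‖f1 - g1‖ ≤ Real.exp (-lam) * δ + lam * ∑ i, |W i| * (S i * δ) := by
      calc ‖f1 - g1‖
          ≤ ‖Real.exp (-lam) • (f0 - g0)‖
            + ‖lam • ∑ i, W i • (μ⁻¹ • (P (F i) - P (G i)))‖ := by
            rw [hdiff1]; exact norm_add_le _ _
        _ ≤ Real.exp (-lam) * δ + lam * ∑ i, |W i| * (S i * δ) := by
            gcongr
            · rw [norm_smul, Real.norm_eq_abs, abs_of_pos (Real.exp_pos _)]
            · rw [norm_smul, Real.norm_eq_abs, abs_of_nonneg hlam]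
              exact mul_le_mul_of_nonneg_left
                ((norm_sum_le _ _).trans (Finset.sum_le_sum fun i _ => hterm1 i)) hlam
    refine hb.trans (le_of_eq ?_)
    rw [add_mul]
    congr 1
    rw [hS]
    simp only [dotProduct, Finset.mul_sum, Finset.sum_mul]
    rw [Finset.sum_comm]
    refine Finset.sum_congr rfl fun i _ => ?_
    refine Finset.sum_congr rfl fun k _ => ?_
    ring
  constructor
  · exact hmain
  · intro hR
    exact hmain.trans (mul_le_of_le_one_left (norm_nonneg _) hR)
end

section
/- Consider the abstract exponential Runge–Kutta scheme with a μ-Lipschitz map 𝒫, and assume in addition that 𝒫(M) = μM. Then: (i) if f⁰ = M, every stage equals M and f¹ = M (M is an equilibrium of the scheme); (ii) for any f⁰ ∈ E, ‖f¹ − M‖ ≤ R(λ) ‖f⁰ − M‖. Consequently, if R(λ) → 0 as λ → ∞, then for fixed f⁰ the update f¹ = f¹(λ) converges to M as λ → ∞ (asymptotic preservation). -/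
open Matrix Filter

/-- Powers of a strictly lower triangular matrix: `(B^k) i j = 0` when `i < j + k`. -/
lemma strictLower_pow_apply {n : ℕ} (B : Matrix (Fin n) (Fin n) ℝ)
    (hB : ∀ i j : Fin n, i ≤ j → B i j = 0) :
    ∀ (k : ℕ) (i j : Fin n), (i : ℕ) < (j : ℕ) + k → (B ^ k) i j = 0 := by
  intro k
  induction k with
  | zero =>
    intro i j h
    rw [pow_zero]
    have : i ≠ j := by
      intro hij
      subst hij
      simp at h
    exact Matrix.one_apply_ne this
  | succ k IH =>
    intro i j h
    rw [pow_succ, Matrix.mul_apply]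
    apply Finset.sum_eq_zero
    intro l _
    by_cases hl : (l : ℕ) ≤ (j : ℕ)
    · rw [hB l j (Fin.le_def.mpr hl), mul_zero]
    · rw [IH i l (by omega), zero_mul]

lemma pow_apply_nonneg {n : ℕ} (B : Matrix (Fin n) (Fin n) ℝ)
    (hB : ∀ i j, 0 ≤ B i j) (k : ℕ) : ∀ i j, 0 ≤ (B ^ k) i j := by
  induction k with
  | zero => intro i j; rw [pow_zero, Matrix.one_apply]; positivity
  | succ k IH =>
    intro i j
    rw [pow_succ, Matrix.mul_apply]
    exact Finset.sum_nonneg fun l _ => mul_nonneg (IH i l) (hB l j)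

/-- for the abstract exponential Runge–Kutta scheme with `𝒫(M) = μM`:
(i) `M` is an equilibrium of the scheme; (ii) `‖f¹ - M‖ ≤ R(λ)‖f⁰ - M‖`;
(iii) if `R(λ) → 0` as `λ → ∞` then `f¹(λ) → M` (asymptotic preservation). -/
theorem expRK_equilibrium_and_asymptotic_preservation
    {E : Type*} [NormedAddCommGroup E] [NormedSpace ℝ E]
    (ν : ℕ) (hν : 1 ≤ ν)
    (c : Fin ν → ℝ) (hc : ∀ i, 0 ≤ c i)
    (A : ℝ → Matrix (Fin ν) (Fin ν) ℝ)
    (hA : ∀ (lam : ℝ) (i j : Fin ν), i ≤ j → A lam i j = 0)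
    (W : ℝ → Fin ν → ℝ) (μ : ℝ) (hμ : 0 < μ) (M : E)
    (P : E → E) (hP : ∀ f g : E, ‖P f - P g‖ ≤ μ * ‖f - g‖)
    (hPM : P M = μ • M)
    (f0 : E) (F : ℝ → Fin ν → E) (f1 : ℝ → E)
    (hF : ∀ lam : ℝ, 0 ≤ lam → ∀ i, F lam i = Real.exp (-(c i * lam)) • f0
      + lam • ∑ j ∈ Finset.Iio i, A lam i j • (μ⁻¹ • P (F lam j) - M)
      + (1 - Real.exp (-(c i * lam))) • M)
    (hf1 : ∀ lam : ℝ, 0 ≤ lam → f1 lam = Real.exp (-lam) • f0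
      + lam • ∑ i, W lam i • (μ⁻¹ • P (F lam i) - M) + (1 - Real.exp (-lam)) • M)
    (R : ℝ → ℝ)
    (hR : ∀ lam : ℝ, R lam = Real.exp (-lam) + ∑ k ∈ Finset.range ν, lam ^ (k + 1) *
      ((fun i => |W lam i|) ⬝ᵥ ((((A lam).map fun x => |x|) ^ k *
        Matrix.diagonal fun i => Real.exp (-(c i * lam))) *ᵥ fun _ => 1))) :
    (f0 = M → ∀ lam : ℝ, 0 ≤ lam → (∀ i, F lam i = M) ∧ f1 lam = M) ∧
    (∀ lam : ℝ, 0 ≤ lam → ‖f1 lam - M‖ ≤ R lam * ‖f0 - M‖) ∧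
    (Tendsto R atTop (nhds 0) → Tendsto f1 atTop (nhds M)) := by
  -- basic facts
  have hμM : μ⁻¹ • P M = M := by
    rw [hPM, smul_smul, inv_mul_cancel₀ hμ.ne', one_smul]
  have hPterm : ∀ x : E, ‖μ⁻¹ • P x - M‖ ≤ ‖x - M‖ := by
    intro x
    calc ‖μ⁻¹ • P x - M‖ = ‖μ⁻¹ • (P x - P M)‖ := by rw [smul_sub, hμM]
      _ = |μ⁻¹| * ‖P x - P M‖ := by rw [norm_smul, Real.norm_eq_abs]
      _ = μ⁻¹ * ‖P x - P M‖ := by rw [abs_of_pos (inv_pos.mpr hμ)]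
      _ ≤ μ⁻¹ * (μ * ‖x - M‖) :=
        mul_le_mul_of_nonneg_left (hP x M) (inv_pos.mpr hμ).le
      _ = ‖x - M‖ := by field_simp
  -- Part (ii), the main estimate
  have part2 : ∀ lam : ℝ, 0 ≤ lam → ‖f1 lam - M‖ ≤ R lam * ‖f0 - M‖ := by
    intro lam hlam
    set N := ‖f0 - M‖ with hN
    set b : Fin ν → ℝ := fun i => Real.exp (-(c i * lam)) with hb
    set Ab : Matrix (Fin ν) (Fin ν) ℝ := (A lam).map fun x => |x| with hAb
    have hAb0 : ∀ i j : Fin ν, i ≤ j → Ab i j = 0 := by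
      intro i j h
      simp [hAb, Matrix.map_apply, hA lam i j h]
    have hAbnn : ∀ i j, 0 ≤ Ab i j := fun i j => abs_nonneg _
    set S : Fin ν → ℝ := fun i => ∑ k ∈ Finset.range ν, lam ^ k * ((Ab ^ k *ᵥ b) i) with hS
    -- key matrix identity
    have hSid : ∀ i : Fin ν, b i + lam * ∑ j ∈ Finset.Iio i, Ab i j * S j = S i := by
      intro i
      have h1 : ∑ j ∈ Finset.Iio i, Ab i j * S j = ∑ j : Fin ν, Ab i j * S j := by
        apply Finset.sum_subset (Finset.subset_univ _)
        intro j _ hj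
        rw [hAb0 i j (le_of_not_gt (by simpa [Finset.mem_Iio] using hj)), zero_mul]
      have h2 : ∀ k : ℕ, ∑ j : Fin ν, Ab i j * ((Ab ^ k *ᵥ b) j) = (Ab ^ (k + 1) *ᵥ b) i := by
        intro k
        rw [pow_succ', ← Matrix.mulVec_mulVec]
        simp [Matrix.mulVec, dotProduct]
      have h3 : ∑ j : Fin ν, Ab i j * S j = ∑ k ∈ Finset.range ν, lam ^ k * ((Ab ^ (k + 1) *ᵥ b) i) := by
        simp only [hS, Finset.mul_sum]
        rw [Finset.sum_comm]
        refine Finset.sum_congr rfl fun k _ => ?_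
        rw [← h2 k, Finset.mul_sum]
        refine Finset.sum_congr rfl fun j _ => by ring
      have h4 : (Ab ^ ν *ᵥ b) i = 0 := by
        simp only [Matrix.mulVec, dotProduct]
        refine Finset.sum_eq_zero fun j _ => ?_
        rw [strictLower_pow_apply Ab hAb0 ν i j (by omega), zero_mul]
      calc b i + lam * ∑ j ∈ Finset.Iio i, Ab i j * S j
          = b i + ∑ k ∈ Finset.range ν, lam ^ (k + 1) * ((Ab ^ (k + 1) *ᵥ b) i) := by
            rw [h1, h3, Finset.mul_sum]
            congr 1
            exact Finset.sum_congr rfl fun k _ => by ring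
        _ = ∑ k ∈ Finset.range (ν + 1), lam ^ k * ((Ab ^ k *ᵥ b) i) := by
            rw [Finset.sum_range_succ']
            simp [pow_zero, Matrix.one_mulVec]
            ring
        _ = S i := by
            rw [Finset.sum_range_succ, h4, hS]
            ring
    -- stage estimate
    have hstage : ∀ i : Fin ν, ‖F lam i - M‖ ≤ S i * N := by
      have key : ∀ n : ℕ, ∀ i : Fin ν, (i : ℕ) < n → ‖F lam i - M‖ ≤ S i * N := by
        intro n
        induction n with
        | zero => intro i hi; omega
        | succ n IH =>
          intro i hi
          have hFi : F lam i - M = b i • (f0 - M)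
              + lam • ∑ j ∈ Finset.Iio i, A lam i j • (μ⁻¹ • P (F lam j) - M) := by
            rw [hF lam hlam i]
            module
          have hsumle : ‖∑ j ∈ Finset.Iio i, A lam i j • (μ⁻¹ • P (F lam j) - M)‖
              ≤ ∑ j ∈ Finset.Iio i, Ab i j * (S j * N) := by
            refine (norm_sum_le _ _).trans (Finset.sum_le_sum fun j hj => ?_)
            have hj' : (j : ℕ) < n := by
              have := Finset.mem_Iio.mp hj
              have := Fin.lt_def.mp this
              omega
            calc ‖A lam i j • (μ⁻¹ • P (F lam j) - M)‖
                = |A lam i j| * ‖μ⁻¹ • P (F lam j) - M‖ := by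
                  rw [norm_smul, Real.norm_eq_abs]
              _ ≤ Ab i j * (S j * N) := by
                  refine mul_le_mul_of_nonneg_left ?_ (abs_nonneg _)
                  exact (hPterm _).trans (IH j hj')
          calc ‖F lam i - M‖
              ≤ ‖b i • (f0 - M)‖ + ‖lam • ∑ j ∈ Finset.Iio i, A lam i j • (μ⁻¹ • P (F lam j) - M)‖ := by
                rw [hFi]; exact norm_add_le _ _
            _ ≤ b i * N + lam * ∑ j ∈ Finset.Iio i, Ab i j * (S j * N) := by
                rw [norm_smul, norm_smul, Real.norm_eq_abs, Real.norm_eq_abs,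
                  abs_of_nonneg (Real.exp_nonneg _), abs_of_nonneg hlam]
                exact add_le_add le_rfl (mul_le_mul_of_nonneg_left hsumle hlam)
            _ = (b i + lam * ∑ j ∈ Finset.Iio i, Ab i j * S j) * N := by
                rw [add_mul, mul_assoc, Finset.sum_mul]
                congr 2
                exact Finset.sum_congr rfl fun j _ => by ring
            _ = S i * N := by rw [hSid i]
      exact fun i => key ν i i.isLt
    -- R identity
    have hRid : R lam = Real.exp (-lam) + lam * ∑ i : Fin ν, |W lam i| * S i := by
      rw [hR lam]
      congr 1
      have hvec : ∀ (k : ℕ) (i : Fin ν),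
          (((Ab ^ k) * Matrix.diagonal b) *ᵥ (fun _ => (1 : ℝ))) i = (Ab ^ k *ᵥ b) i := by
        intro k i
        rw [← Matrix.mulVec_mulVec]
        congr 1
        ext j
        rw [Matrix.mulVec_diagonal]
        ring
      calc ∑ k ∈ Finset.range ν, lam ^ (k + 1) *
            ((fun i => |W lam i|) ⬝ᵥ (((Ab ^ k) * Matrix.diagonal b) *ᵥ fun _ => 1))
          = ∑ k ∈ Finset.range ν, ∑ i : Fin ν, lam ^ (k + 1) * (|W lam i| * (Ab ^ k *ᵥ b) i) := by
            refine Finset.sum_congr rfl fun k _ => ?_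
            rw [dotProduct, Finset.mul_sum]
            exact Finset.sum_congr rfl fun i _ => by rw [hvec k i]
        _ = lam * ∑ i : Fin ν, |W lam i| * S i := by
            rw [Finset.sum_comm, Finset.mul_sum]
            refine Finset.sum_congr rfl fun i _ => ?_
            rw [hS]
            simp only [Finset.mul_sum]
            exact Finset.sum_congr rfl fun k _ => by ring
    -- final estimate
    have hf1eq : f1 lam - M = Real.exp (-lam) • (f0 - M)
        + lam • ∑ i : Fin ν, W lam i • (μ⁻¹ • P (F lam i) - M) := by
      rw [hf1 lam hlam]
      module
    calc ‖f1 lam - M‖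
        ≤ ‖Real.exp (-lam) • (f0 - M)‖ + ‖lam • ∑ i : Fin ν, W lam i • (μ⁻¹ • P (F lam i) - M)‖ := by
          rw [hf1eq]; exact norm_add_le _ _
      _ ≤ Real.exp (-lam) * N + lam * ∑ i : Fin ν, |W lam i| * (S i * N) := by
          rw [norm_smul, norm_smul, Real.norm_eq_abs, Real.norm_eq_abs,
            abs_of_nonneg (Real.exp_nonneg _), abs_of_nonneg hlam]
          refine add_le_add le_rfl (mul_le_mul_of_nonneg_left ?_ hlam)
          refine (norm_sum_le _ _).trans (Finset.sum_le_sum fun i _ => ?_)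
          rw [norm_smul, Real.norm_eq_abs]
          exact mul_le_mul_of_nonneg_left ((hPterm _).trans (hstage i)) (abs_nonneg _)
      _ = (Real.exp (-lam) + lam * ∑ i : Fin ν, |W lam i| * S i) * N := by
          rw [add_mul, mul_assoc, Finset.sum_mul]
          congr 2
          exact Finset.sum_congr rfl fun i _ => by ring
      _ = R lam * N := by rw [hRid]
  refine ⟨?_, part2, ?_⟩
  · -- Part (i): equilibrium
    intro hf0 lam hlam
    have hFM : ∀ i : Fin ν, F lam i = M := by
      have key : ∀ n : ℕ, ∀ i : Fin ν, (i : ℕ) < n → F lam i = M := by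
        intro n
        induction n with
        | zero => intro i hi; omega
        | succ n IH =>
          intro i hi
          rw [hF lam hlam i, hf0]
          have hz : ∑ j ∈ Finset.Iio i, A lam i j • (μ⁻¹ • P (F lam j) - M) = 0 := by
            refine Finset.sum_eq_zero fun j hj => ?_
            have hj' : (j : ℕ) < n := by
              have := Fin.lt_def.mp (Finset.mem_Iio.mp hj)
              omega
            rw [IH j hj', hμM, sub_self, smul_zero]
          rw [hz]
          module
      exact fun i => key ν i i.isLt
    refine ⟨hFM, ?_⟩
    rw [hf1 lam hlam, hf0]
    have hz : ∑ i : Fin ν, W lam i • (μ⁻¹ • P (F lam i) - M) = 0 := by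
      refine Finset.sum_eq_zero fun i _ => ?_
      rw [hFM i, hμM, sub_self, smul_zero]
    rw [hz]
    module
  · -- Part (iii): asymptotic preservation
    intro hRt
    rw [tendsto_iff_norm_sub_tendsto_zero]
    refine squeeze_zero' (g := fun lam => R lam * ‖f0 - M‖) (Eventually.of_forall fun _ => norm_nonneg _) ?_ ?_
    · filter_upwards [eventually_ge_atTop (0 : ℝ)] with lam hlam
      exact part2 lam hlam
    · have := hRt.mul_const ‖f0 - M‖
      simpa using this
end

section
/- Let ν ≥ 1, let (a_{ij}) be a real ν×ν strictly lower triangular matrix, w ∈ ℝ^ν, c ∈ ℝ^ν, and λ ∈ ℝ. Define the integrating factor coefficients A(λ)_{ij} = a_{ij} e^{−(c_i − c_j)λ} for j < i (and 0 otherwise), W_i(λ) = w_i e^{−(1 − c_i)λ}, and E(λ) = diag(e^{−c_1λ}, …, e^{−c_νλ}). Then for every integer k ≥ 0, W(λ)ᵀ A(λ)^k E(λ) ē = e^{−λ} wᵀ a^k ē, where ē is the all-ones vector. In particular, if all a_{ij} ≥ 0 and all w_i ≥ 0, the stability function of the IF method equals R(λ) = e^{−λ}(1 + ∑_{k=0}^{ν−1}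 λ^{k+1} wᵀ a^k ē). -/
open Matrix

/-- for integrating factor coefficients
`A(λ)_{ij} = a_{ij} e^{-(c_i - c_j)λ}` (j < i), `W_i(λ) = w_i e^{-(1-c_i)λ}`,
`E(λ) = diag(e^{-c_iλ})`, one has `W(λ)ᵀ A(λ)^k E(λ) ē = e^{-λ} wᵀ a^k ē`;
in particular for nonnegative `a`, `w` the stability function equals
`R(λ) = e^{-λ}(1 + ∑_{k<ν} λ^{k+1} wᵀ a^k ē)`. -/
theorem integrating_factor_stability_function
    (ν : ℕ) (hν : 1 ≤ ν)
    (a : Matrix (Fin ν) (Fin ν) ℝ) (ha : ∀ i j : Fin ν, i ≤ j → a i j = 0)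
    (w c : Fin ν → ℝ) (lam : ℝ)
    (A : Matrix (Fin ν) (Fin ν) ℝ)
    (hA : ∀ i j : Fin ν, A i j = if j < i then a i j * Real.exp (-(c i - c j) * lam) else 0)
    (Wv : Fin ν → ℝ) (hW : ∀ i, Wv i = w i * Real.exp (-(1 - c i) * lam))
    (Ed : Matrix (Fin ν) (Fin ν) ℝ)
    (hE : Ed = Matrix.diagonal fun i => Real.exp (-(c i * lam))) :
    (∀ k : ℕ, Wv ⬝ᵥ ((A ^ k * Ed) *ᵥ fun _ => 1) =
      Real.exp (-lam) * (w ⬝ᵥ (a ^ k *ᵥ fun _ => 1))) ∧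
    ((∀ i j, 0 ≤ a i j) → (∀ i, 0 ≤ w i) →
      Real.exp (-lam) + ∑ k ∈ Finset.range ν, lam ^ (k + 1) *
        ((fun i => |Wv i|) ⬝ᵥ (((A.map fun x => |x|) ^ k * Ed) *ᵥ fun _ => 1))
      = Real.exp (-lam) *
        (1 + ∑ k ∈ Finset.range ν, lam ^ (k + 1) * (w ⬝ᵥ (a ^ k *ᵥ fun _ => 1)))) := by
  -- Commutation: A * Ed = Ed * a
  have comm : A * Ed = Ed * a := by
    ext i j
    rw [hE]
    rw [Matrix.mul_diagonal, Matrix.diagonal_mul, hA]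
    by_cases h : j < i
    · rw [if_pos h, mul_assoc, ← Real.exp_add]
      ring_nf
    · rw [if_neg h, ha i j (le_of_not_gt h), zero_mul, mul_zero]
  -- Key: A^k * Ed = Ed * a^k
  have key : ∀ k : ℕ, A ^ k * Ed = Ed * a ^ k := by
    intro k
    induction k with
    | zero => simp
    | succ k ih =>
      rw [pow_succ', Matrix.mul_assoc, ih, ← Matrix.mul_assoc, comm,
        Matrix.mul_assoc, ← pow_succ']
  -- vector form
  have keyv : ∀ k : ℕ, ((A ^ k * Ed) *ᵥ fun _ => 1) =
      fun i => Real.exp (-(c i * lam)) * ((a ^ k *ᵥ fun _ => 1) i) := by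
    intro k
    funext i
    rw [key k, ← Matrix.mulVec_mulVec, hE, Matrix.mulVec_diagonal]
  have part1 : ∀ k : ℕ, Wv ⬝ᵥ ((A ^ k * Ed) *ᵥ fun _ => 1) =
      Real.exp (-lam) * (w ⬝ᵥ (a ^ k *ᵥ fun _ => 1)) := by
    intro k
    rw [keyv k]
    simp only [dotProduct]
    rw [Finset.mul_sum]
    refine Finset.sum_congr rfl fun i _ => ?_
    rw [hW]
    have he : Real.exp (-(1 - c i) * lam) * Real.exp (-(c i * lam)) = Real.exp (-lam) := by
      rw [← Real.exp_add]; ring_nf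
    rw [← he]; ring
  refine ⟨part1, fun hapos hwpos => ?_⟩
  have hAmap : (A.map fun x => |x|) = A := by
    ext i j
    simp only [Matrix.map_apply]
    rw [hA]
    by_cases h : j < i
    · rw [if_pos h, abs_of_nonneg (mul_nonneg (hapos i j) (Real.exp_pos _).le)]
    · rw [if_neg h, abs_zero]
  have hWabs : (fun i => |Wv i|) = Wv := by
    funext i
    rw [hW, abs_of_nonneg (mul_nonneg (hwpos i) (Real.exp_pos _).le)]
  rw [hAmap, hWabs, mul_add, mul_one, Finset.mul_sum]
  congr 1
  refine Finset.sum_congr rfl fun k _ => ?_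
  rw [part1 k]; ring
end

section
/- Consider the abstract exponential Runge–Kutta scheme with integrating factor coefficients A_{ij}(λ) = a_{ij} e^{−(c_i − c_j)λ} (j < i) and W_i(λ) = w_i e^{−(1 − c_i)λ}, where a_{ij} ≥ 0, w_i ≥ 0, and 0 ≤ c_1 ≤ c_2 ≤ … ≤ c_ν ≤ 1. Assume 𝒫 is μ-Lipschitz and 𝒫(M) = μM. Then for every fixed f⁰ ∈ E, the update f¹ = f¹(λ) converges to M in E as λ → ∞. -/
open Filter

/-- asymptotic preservation of the integrating factor exponential
Runge–Kutta scheme with nonnegative underlying coefficients and ordered nodes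
`0 ≤ c_1 ≤ … ≤ c_ν ≤ 1`: the update `f¹(λ)` converges to `M` as `λ → ∞`. -/
theorem IF_scheme_asymptotic_preservation
    {E : Type*} [NormedAddCommGroup E] [NormedSpace ℝ E]
    (ν : ℕ) (hν : 1 ≤ ν)
    (a : Matrix (Fin ν) (Fin ν) ℝ) (ha0 : ∀ i j : Fin ν, i ≤ j → a i j = 0)
    (hann : ∀ i j, 0 ≤ a i j)
    (w : Fin ν → ℝ) (hw : ∀ i, 0 ≤ w i)
    (c : Fin ν → ℝ) (hc0 : ∀ i, 0 ≤ c i) (hc1 : ∀ i, c i ≤ 1) (hcmono : Monotone c)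
    (μ : ℝ) (hμ : 0 < μ) (M : E)
    (P : E → E) (hP : ∀ f g : E, ‖P f - P g‖ ≤ μ * ‖f - g‖)
    (hPM : P M = μ • M)
    (f0 : E) (F : ℝ → Fin ν → E) (f1 : ℝ → E)
    (hF : ∀ lam : ℝ, 0 ≤ lam → ∀ i, F lam i = Real.exp (-(c i * lam)) • f0
      + lam • ∑ j ∈ Finset.Iio i,
          (a i j * Real.exp (-(c i - c j) * lam)) • (μ⁻¹ • P (F lam j) - M)
      + (1 - Real.exp (-(c i * lam))) • M)
    (hf1 : ∀ lam : ℝ, 0 ≤ lam → f1 lam = Real.exp (-lam) • f0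
      + lam • ∑ i, (w i * Real.exp (-(1 - c i) * lam)) • (μ⁻¹ • P (F lam i) - M)
      + (1 - Real.exp (-lam)) • M) :
    Tendsto f1 atTop (nhds M) := by
  -- basic bound on the nonlinearity
  have hPb : ∀ g : E, ‖μ⁻¹ • P g - M‖ ≤ ‖g - M‖ := by
    intro g
    have h1 : μ⁻¹ • P g - M = μ⁻¹ • (P g - P M) := by
      rw [hPM, smul_sub, smul_smul, inv_mul_cancel₀ hμ.ne', one_smul]
    rw [h1, norm_smul, Real.norm_eq_abs, abs_of_pos (inv_pos.mpr hμ)]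
    calc μ⁻¹ * ‖P g - P M‖ ≤ μ⁻¹ * (μ * ‖g - M‖) := by
          exact mul_le_mul_of_nonneg_left (hP g M) (inv_pos.mpr hμ).le
      _ = ‖g - M‖ := by field_simp
  -- key inductive bound on the stages
  have key : ∀ n : ℕ, ∀ i : Fin ν, (i : ℕ) = n → ∃ C : ℝ, 0 ≤ C ∧ ∀ lam : ℝ, 0 ≤ lam →
      ‖F lam i - M‖ ≤ C * (1 + lam) ^ (i : ℕ) * Real.exp (-(c i * lam)) := by
    intro n
    induction n using Nat.strong_induction_on with
    | _ n IH =>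
      intro i hi
      have H : ∀ j : Fin ν, j < i → ∃ C : ℝ, 0 ≤ C ∧ ∀ lam : ℝ, 0 ≤ lam →
          ‖F lam j - M‖ ≤ C * (1 + lam) ^ (j : ℕ) * Real.exp (-(c j * lam)) := by
        intro j hj
        exact IH (j : ℕ) (hi ▸ hj) j rfl
      classical
      choose Cf hCf0 hCf using H
      set Cfull : Fin ν → ℝ := fun j => if h : j < i then Cf j h else 0 with hCfull
      have hCfull0 : ∀ j, 0 ≤ Cfull j := by
        intro j; simp only [hCfull]; split
        · exact hCf0 _ _
        · exact le_rfl
      refine ⟨‖f0 - M‖ + ∑ j ∈ Finset.Iio i, a i j * Cfull j, ?_, ?_⟩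
      · have : 0 ≤ ∑ j ∈ Finset.Iio i, a i j * Cfull j :=
          Finset.sum_nonneg fun j _ => mul_nonneg (hann i j) (hCfull0 j)
        positivity
      intro lam hlam
      set e := Real.exp (-(c i * lam)) with he
      have he0 : 0 ≤ e := Real.exp_pos _ |>.le
      have he1 : e ≤ 1 := Real.exp_le_one_iff.mpr (by nlinarith [hc0 i])
      have hone : (1 : ℝ) ≤ 1 + lam := by linarith
      have hpow1 : (1 : ℝ) ≤ (1 + lam) ^ (i : ℕ) := one_le_pow₀ hone
      -- rewrite the stage
      have hdiff : F lam i - M = e • (f0 - M) + lam •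
          ∑ j ∈ Finset.Iio i,
            (a i j * Real.exp (-(c i - c j) * lam)) • (μ⁻¹ • P (F lam j) - M) := by
        rw [hF lam hlam i]
        module
      rw [hdiff]
      have hterm : ∀ j ∈ Finset.Iio i,
          ‖(a i j * Real.exp (-(c i - c j) * lam)) • (μ⁻¹ • P (F lam j) - M)‖
          ≤ a i j * Cfull j * (1 + lam) ^ (j : ℕ) * e := by
        intro j hj
        have hj' : j < i := Finset.mem_Iio.mp hj
        rw [norm_smul, Real.norm_eq_abs,
          abs_of_nonneg (mul_nonneg (hann i j) (Real.exp_pos _).le)]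
        have hFj : ‖F lam j - M‖ ≤ Cfull j * (1 + lam) ^ (j : ℕ) * Real.exp (-(c j * lam)) := by
          have := hCf j hj' lam hlam
          simpa [hCfull, dif_pos hj'] using this
        have h2 : ‖μ⁻¹ • P (F lam j) - M‖ ≤ Cfull j * (1 + lam) ^ (j : ℕ)
            * Real.exp (-(c j * lam)) := le_trans (hPb _) hFj
        calc a i j * Real.exp (-(c i - c j) * lam) * ‖μ⁻¹ • P (F lam j) - M‖
            ≤ a i j * Real.exp (-(c i - c j) * lam)
              * (Cfull j * (1 + lam) ^ (j : ℕ) * Real.exp (-(c j * lam))) := by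
              exact mul_le_mul_of_nonneg_left h2
                (mul_nonneg (hann i j) (Real.exp_pos _).le)
          _ = a i j * Cfull j * (1 + lam) ^ (j : ℕ)
              * (Real.exp (-(c i - c j) * lam) * Real.exp (-(c j * lam))) := by ring
          _ = a i j * Cfull j * (1 + lam) ^ (j : ℕ) * e := by
              rw [← Real.exp_add, he]; ring_nf
      calc ‖e • (f0 - M) + lam • ∑ j ∈ Finset.Iio i,
              (a i j * Real.exp (-(c i - c j) * lam)) • (μ⁻¹ • P (F lam j) - M)‖
          ≤ ‖e • (f0 - M)‖ + ‖lam • ∑ j ∈ Finset.Iio i,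
              (a i j * Real.exp (-(c i - c j) * lam)) • (μ⁻¹ • P (F lam j) - M)‖ :=
            norm_add_le _ _
        _ ≤ e * ‖f0 - M‖ + lam * ∑ j ∈ Finset.Iio i,
              (a i j * Cfull j * (1 + lam) ^ (j : ℕ) * e) := by
            gcongr
            · rw [norm_smul, Real.norm_eq_abs, abs_of_nonneg he0]
            · rw [norm_smul, Real.norm_eq_abs, abs_of_nonneg hlam]
              exact mul_le_mul_of_nonneg_left
                (le_trans (norm_sum_le _ _) (Finset.sum_le_sum hterm)) hlam
        _ ≤ ‖f0 - M‖ * (1 + lam) ^ (i : ℕ) * e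
            + ∑ j ∈ Finset.Iio i, (a i j * Cfull j * (1 + lam) ^ (i : ℕ) * e) := by
            gcongr ?_ + ?_
            · calc e * ‖f0 - M‖ = ‖f0 - M‖ * 1 * e := by ring
                _ ≤ ‖f0 - M‖ * (1 + lam) ^ (i : ℕ) * e := by gcongr
            · rw [Finset.mul_sum]
              refine Finset.sum_le_sum fun j hj => ?_
              have hj' : (j : ℕ) < (i : ℕ) := Fin.lt_iff_val_lt_val.mp (Finset.mem_Iio.mp hj)
              calc lam * (a i j * Cfull j * (1 + lam) ^ (j : ℕ) * e)
                  = a i j * Cfull j * (lam * (1 + lam) ^ (j : ℕ)) * e := by ring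
                _ ≤ a i j * Cfull j * (1 + lam) ^ (i : ℕ) * e := by
                    gcongr
                    · exact mul_nonneg (hann i j) (hCfull0 j)
                    calc lam * (1 + lam) ^ (j : ℕ) ≤ (1 + lam) * (1 + lam) ^ (j : ℕ) := by
                          gcongr; linarith
                      _ = (1 + lam) ^ ((j : ℕ) + 1) := by ring
                      _ ≤ (1 + lam) ^ (i : ℕ) := pow_le_pow_right₀ hone hj'
        _ = (‖f0 - M‖ + ∑ j ∈ Finset.Iio i, a i j * Cfull j) * (1 + lam) ^ (i : ℕ) * e := by
            rw [← Finset.sum_mul, ← Finset.sum_mul]; ring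
  choose C hC0 hC using fun i : Fin ν => key (i : ℕ) i rfl
  set D : ℝ := ‖f0 - M‖ + ∑ i, w i * C i with hD
  have hD0 : 0 ≤ D := add_nonneg (norm_nonneg _)
    (Finset.sum_nonneg fun i _ => mul_nonneg (hw i) (hC0 i))
  have hbound : ∀ lam : ℝ, 0 ≤ lam →
      ‖f1 lam - M‖ ≤ D * ((1 + lam) ^ ν * Real.exp (-lam)) := by
    intro lam hlam
    set e := Real.exp (-lam) with he
    have he0 : 0 ≤ e := (Real.exp_pos _).le
    have hone : (1 : ℝ) ≤ 1 + lam := by linarith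
    have hpow1 : (1 : ℝ) ≤ (1 + lam) ^ ν := one_le_pow₀ hone
    have hdiff : f1 lam - M = e • (f0 - M) + lam •
        ∑ i, (w i * Real.exp (-(1 - c i) * lam)) • (μ⁻¹ • P (F lam i) - M) := by
      rw [hf1 lam hlam]
      module
    rw [hdiff]
    have hterm : ∀ i ∈ Finset.univ,
        ‖(w i * Real.exp (-(1 - c i) * lam)) • (μ⁻¹ • P (F lam i) - M)‖
        ≤ w i * C i * (1 + lam) ^ (i : ℕ) * e := by
      intro i _
      rw [norm_smul, Real.norm_eq_abs,
        abs_of_nonneg (mul_nonneg (hw i) (Real.exp_pos _).le)]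
      have h2 : ‖μ⁻¹ • P (F lam i) - M‖ ≤ C i * (1 + lam) ^ (i : ℕ)
          * Real.exp (-(c i * lam)) := le_trans (hPb _) (hC i lam hlam)
      calc w i * Real.exp (-(1 - c i) * lam) * ‖μ⁻¹ • P (F lam i) - M‖
          ≤ w i * Real.exp (-(1 - c i) * lam)
            * (C i * (1 + lam) ^ (i : ℕ) * Real.exp (-(c i * lam))) :=
            mul_le_mul_of_nonneg_left h2 (mul_nonneg (hw i) (Real.exp_pos _).le)
        _ = w i * C i * (1 + lam) ^ (i : ℕ)
            * (Real.exp (-(1 - c i) * lam) * Real.exp (-(c i * lam))) := by ring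
        _ = w i * C i * (1 + lam) ^ (i : ℕ) * e := by
            rw [← Real.exp_add, he]; ring_nf
    calc ‖e • (f0 - M) + lam •
            ∑ i, (w i * Real.exp (-(1 - c i) * lam)) • (μ⁻¹ • P (F lam i) - M)‖
        ≤ ‖e • (f0 - M)‖ + ‖lam •
            ∑ i, (w i * Real.exp (-(1 - c i) * lam)) • (μ⁻¹ • P (F lam i) - M)‖ :=
          norm_add_le _ _
      _ ≤ e * ‖f0 - M‖ + lam * ∑ i, (w i * C i * (1 + lam) ^ (i : ℕ) * e) := by
          gcongr
          · rw [norm_smul, Real.norm_eq_abs, abs_of_nonneg he0]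
          · rw [norm_smul, Real.norm_eq_abs, abs_of_nonneg hlam]
            exact mul_le_mul_of_nonneg_left
              (le_trans (norm_sum_le _ _) (Finset.sum_le_sum hterm)) hlam
      _ ≤ ‖f0 - M‖ * (1 + lam) ^ ν * e
          + ∑ i, (w i * C i * (1 + lam) ^ ν * e) := by
          gcongr ?_ + ?_
          · calc e * ‖f0 - M‖ = ‖f0 - M‖ * 1 * e := by ring
              _ ≤ ‖f0 - M‖ * (1 + lam) ^ ν * e := by gcongr
          · rw [Finset.mul_sum]
            refine Finset.sum_le_sum fun i _ => ?_
            calc lam * (w i * C i * (1 + lam) ^ (i : ℕ) * e)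
                = w i * C i * (lam * (1 + lam) ^ (i : ℕ)) * e := by ring
              _ ≤ w i * C i * (1 + lam) ^ ν * e := by
                  gcongr
                  · exact mul_nonneg (hw i) (hC0 i)
                  calc lam * (1 + lam) ^ (i : ℕ) ≤ (1 + lam) * (1 + lam) ^ (i : ℕ) := by
                        gcongr; linarith
                    _ = (1 + lam) ^ ((i : ℕ) + 1) := by ring
                    _ ≤ (1 + lam) ^ ν := pow_le_pow_right₀ hone i.isLt
      _ = D * ((1 + lam) ^ ν * e) := by
          rw [hD, ← Finset.sum_mul, ← Finset.sum_mul]; ring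
  have h1 : Tendsto (fun lam : ℝ => (1 + lam) ^ ν * Real.exp (-(1 + lam)))
      atTop (nhds 0) :=
    (Real.tendsto_pow_mul_exp_neg_atTop_nhds_zero ν).comp
      (tendsto_atTop_add_const_left atTop 1 tendsto_id)
  have h2 : Tendsto (fun lam : ℝ => D * ((1 + lam) ^ ν * Real.exp (-lam)))
      atTop (nhds 0) := by
    have h3 := h1.const_mul (D * Real.exp 1)
    rw [mul_zero] at h3
    refine h3.congr fun lam => ?_
    have : Real.exp (-(1 + lam)) = Real.exp (-1) * Real.exp (-lam) := by
      rw [← Real.exp_add]; ring_nf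
    rw [this]
    have h4 : Real.exp 1 * Real.exp (-1) = 1 := by
      rw [← Real.exp_add]; simp
    linear_combination (D * (1 + lam) ^ ν * Real.exp (-lam)) * h4
  rw [tendsto_iff_norm_sub_tendsto_zero]
  refine squeeze_zero' ?_ ?_ h2
  · filter_upwards with lam using norm_nonneg _
  · filter_upwards [eventually_ge_atTop (0 : ℝ)] with lam hlam using hbound lam hlam
end

section
/- Consider the abstract exponential Runge–Kutta scheme with integrating factor coefficients A_{ij}(λ) = a_{ij} e^{−(c_i − c_j)λ} (j < i) and W_i(λ) = w_i e^{−(1 − c_i)λ}, where a_{ij}, w_i are arbitrary real coefficients and the nodes satisfy the strict inequalities 0 = c_1 < c_2 < … < c_ν < 1. Assume 𝒫 is μ-Lipschitz and 𝒫(M) = μM. Then for every fixed f⁰ ∈ E, each stage F⁽ⁱ⁾(λ) with i ≥ 2 converges to M as λ → ∞, and the update f¹(λ) converges to M as λ → ∞. -/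
open Filter

lemma IF_aux_tendsto (n : ℕ) {ε : ℝ} (hε : 0 < ε) :
    Tendsto (fun lam : ℝ => (1 + lam) ^ n * Real.exp (-(ε * lam))) atTop (nhds 0) := by
  have h1 : Tendsto (fun t : ℝ => t ^ n * Real.exp (-t)) atTop (nhds 0) :=
    Real.tendsto_pow_mul_exp_neg_atTop_nhds_zero n
  have h2 : Tendsto (fun lam : ℝ => ε * (1 + lam)) atTop atTop := by
    apply Tendsto.const_mul_atTop hε
    exact tendsto_atTop_add_const_left _ 1 tendsto_id
  have h3 := (h1.comp h2).const_mul (Real.exp ε / ε ^ n)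
  rw [mul_zero] at h3
  refine h3.congr fun lam => ?_
  simp only [Function.comp_apply]
  rw [mul_pow, show -(ε * (1 + lam)) = -ε + -(ε * lam) by ring, Real.exp_add, Real.exp_neg]
  have hεn : (ε : ℝ) ^ n ≠ 0 := pow_ne_zero _ hε.ne'
  have hexp : Real.exp ε ≠ 0 := Real.exp_ne_zero _
  field_simp

set_option maxHeartbeats 1600000 in
/-- strong asymptotic preservation of the integrating factor scheme
under the strict node conditions `0 = c_1 < c_2 < … < c_ν < 1`: every stage
`F⁽ⁱ⁾(λ)` with `i ≥ 2` and the update `f¹(λ)` converge to `M` as `λ → ∞`. -/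
theorem IF_scheme_strong_asymptotic_preservation
    {E : Type*} [NormedAddCommGroup E] [NormedSpace ℝ E]
    (ν : ℕ) (hν : 1 ≤ ν)
    (a : Matrix (Fin ν) (Fin ν) ℝ) (ha0 : ∀ i j : Fin ν, i ≤ j → a i j = 0)
    (w : Fin ν → ℝ)
    (c : Fin ν → ℝ) (hcfirst : c ⟨0, hν⟩ = 0) (hcmono : StrictMono c)
    (hc1 : ∀ i, c i < 1)
    (μ : ℝ) (hμ : 0 < μ) (M : E)
    (P : E → E) (hP : ∀ f g : E, ‖P f - P g‖ ≤ μ * ‖f - g‖)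
    (hPM : P M = μ • M)
    (f0 : E) (F : ℝ → Fin ν → E) (f1 : ℝ → E)
    (hF : ∀ lam : ℝ, 0 ≤ lam → ∀ i, F lam i = Real.exp (-(c i * lam)) • f0
      + lam • ∑ j ∈ Finset.Iio i,
          (a i j * Real.exp (-(c i - c j) * lam)) • (μ⁻¹ • P (F lam j) - M)
      + (1 - Real.exp (-(c i * lam))) • M)
    (hf1 : ∀ lam : ℝ, 0 ≤ lam → f1 lam = Real.exp (-lam) • f0
      + lam • ∑ i, (w i * Real.exp (-(1 - c i) * lam)) • (μ⁻¹ • P (F lam i) - M)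
      + (1 - Real.exp (-lam)) • M) :
    (∀ i : Fin ν, 0 < (i : ℕ) → Tendsto (fun lam => F lam i) atTop (nhds M)) ∧
    Tendsto f1 atTop (nhds M) := by
  have hPnorm : ∀ x : E, ‖μ⁻¹ • P x - M‖ ≤ ‖x - M‖ := by
    intro x
    have h1 : μ⁻¹ • P x - M = μ⁻¹ • (P x - P M) := by
      rw [hPM, smul_sub, smul_smul, inv_mul_cancel₀ hμ.ne', one_smul]
    rw [h1, norm_smul, Real.norm_eq_abs, abs_of_nonneg (inv_nonneg.mpr hμ.le)]
    calc μ⁻¹ * ‖P x - P M‖ ≤ μ⁻¹ * (μ * ‖x - M‖) := by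
          apply mul_le_mul_of_nonneg_left (hP x M) (inv_nonneg.mpr hμ.le)
      _ = ‖x - M‖ := by field_simp
  set A : ℝ := ∑ i : Fin ν, ∑ j : Fin ν, |a i j| with hA
  have hA0 : 0 ≤ A := by positivity
  have hAle : ∀ j : Fin ν, ∑ k ∈ Finset.Iio j, |a j k| ≤ A := by
    intro j
    calc ∑ k ∈ Finset.Iio j, |a j k| ≤ ∑ k : Fin ν, |a j k| :=
          Finset.sum_le_sum_of_subset_of_nonneg (Finset.subset_univ _)
            (fun _ _ _ => abs_nonneg _)
      _ ≤ A := Finset.single_le_sum (f := fun i => ∑ k : Fin ν, |a i k|)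
          (fun i _ => by positivity) (Finset.mem_univ j)
  have key : ∀ n : ℕ, ∃ C : ℝ, 0 ≤ C ∧ ∀ j : Fin ν, (j : ℕ) ≤ n → ∀ lam : ℝ, 0 ≤ lam →
      ‖F lam j - M‖ ≤ C * ((1 + lam) ^ n * Real.exp (-(c j * lam))) := by
    intro n
    induction n with
    | zero =>
      refine ⟨‖f0 - M‖, norm_nonneg _, ?_⟩
      intro j hj lam hlam
      have hIio : Finset.Iio j = ∅ := by
        apply Finset.eq_empty_of_forall_notMem
        intro k hk
        rw [Finset.mem_Iio, Fin.lt_def] at hk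
        omega
      have hsub : F lam j - M = Real.exp (-(c j * lam)) • (f0 - M) := by
        rw [hF lam hlam j, hIio, Finset.sum_empty, smul_zero, add_zero, smul_sub,
          sub_smul, one_smul]
        abel
      rw [hsub, norm_smul, Real.norm_eq_abs, Real.abs_exp, pow_zero, one_mul]
      exact le_of_eq (mul_comm _ _)
    | succ n ih =>
      obtain ⟨C, hC0, hC⟩ := ih
      refine ⟨C + (‖f0 - M‖ + C * A), by positivity, ?_⟩
      intro j hj lam hlam
      have hE0 : (0 : ℝ) ≤ Real.exp (-(c j * lam)) := (Real.exp_pos _).le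
      have h1lam : (1 : ℝ) ≤ 1 + lam := by linarith
      have hp1 : (1 : ℝ) ≤ (1 + lam) ^ (n + 1) := one_le_pow₀ h1lam
      rcases lt_or_ge (j : ℕ) (n + 1) with hcase | hcase
      · calc ‖F lam j - M‖ ≤ C * ((1 + lam) ^ n * Real.exp (-(c j * lam))) :=
              hC j (by omega) lam hlam
          _ ≤ (C + (‖f0 - M‖ + C * A)) * ((1 + lam) ^ (n + 1) * Real.exp (-(c j * lam))) := by
              have hpow : (1 + lam) ^ n ≤ (1 + lam) ^ (n + 1) :=
                pow_le_pow_right₀ (by linarith) (by omega)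
              have hCle : C ≤ C + (‖f0 - M‖ + C * A) := by
                have : (0:ℝ) ≤ ‖f0 - M‖ + C * A := by positivity
                linarith
              apply mul_le_mul hCle (by
                apply mul_le_mul_of_nonneg_right hpow hE0) (by positivity) (by positivity)
      · -- j = n + 1
        have hsub : F lam j - M = Real.exp (-(c j * lam)) • (f0 - M)
            + lam • ∑ k ∈ Finset.Iio j,
              (a j k * Real.exp (-(c j - c k) * lam)) • (μ⁻¹ • P (F lam k) - M) := by
          rw [hF lam hlam j, smul_sub, sub_smul, one_smul]
          abel
        have hterm : ∀ k ∈ Finset.Iio j,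
            ‖(a j k * Real.exp (-(c j - c k) * lam)) • (μ⁻¹ • P (F lam k) - M)‖
              ≤ |a j k| * (C * ((1 + lam) ^ n * Real.exp (-(c j * lam)))) := by
          intro k hk
          rw [Finset.mem_Iio, Fin.lt_def] at hk
          have hFk : ‖F lam k - M‖ ≤ C * ((1 + lam) ^ n * Real.exp (-(c k * lam))) :=
            hC k (by omega) lam hlam
          have hexp : Real.exp (-(c j - c k) * lam) * Real.exp (-(c k * lam))
              = Real.exp (-(c j * lam)) := by
            rw [← Real.exp_add]; congr 1; ring
          calc ‖(a j k * Real.exp (-(c j - c k) * lam)) • (μ⁻¹ • P (F lam k) - M)‖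
              = |a j k| * Real.exp (-(c j - c k) * lam) * ‖μ⁻¹ • P (F lam k) - M‖ := by
                rw [norm_smul, Real.norm_eq_abs, abs_mul, Real.abs_exp]
            _ ≤ |a j k| * Real.exp (-(c j - c k) * lam)
                  * (C * ((1 + lam) ^ n * Real.exp (-(c k * lam)))) := by
                apply mul_le_mul_of_nonneg_left ((hPnorm _).trans hFk) (by positivity)
            _ = |a j k| * (C * ((1 + lam) ^ n
                  * (Real.exp (-(c j - c k) * lam) * Real.exp (-(c k * lam))))) := by ring
            _ = |a j k| * (C * ((1 + lam) ^ n * Real.exp (-(c j * lam)))) := by rw [hexp]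
        have hsum : ‖∑ k ∈ Finset.Iio j,
            (a j k * Real.exp (-(c j - c k) * lam)) • (μ⁻¹ • P (F lam k) - M)‖
              ≤ A * (C * ((1 + lam) ^ n * Real.exp (-(c j * lam)))) := by
          calc ‖∑ k ∈ Finset.Iio j,
              (a j k * Real.exp (-(c j - c k) * lam)) • (μ⁻¹ • P (F lam k) - M)‖
              ≤ ∑ k ∈ Finset.Iio j,
                ‖(a j k * Real.exp (-(c j - c k) * lam)) • (μ⁻¹ • P (F lam k) - M)‖ :=
                norm_sum_le _ _
            _ ≤ ∑ k ∈ Finset.Iio j,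
                |a j k| * (C * ((1 + lam) ^ n * Real.exp (-(c j * lam)))) :=
                Finset.sum_le_sum hterm
            _ = (∑ k ∈ Finset.Iio j, |a j k|)
                  * (C * ((1 + lam) ^ n * Real.exp (-(c j * lam)))) := by
                rw [Finset.sum_mul]
            _ ≤ A * (C * ((1 + lam) ^ n * Real.exp (-(c j * lam)))) := by
                apply mul_le_mul_of_nonneg_right (hAle j) (by positivity)
        have hX0 : (0 : ℝ) ≤ (1 + lam) ^ (n + 1) * Real.exp (-(c j * lam)) := by positivity
        have h1 : Real.exp (-(c j * lam)) * ‖f0 - M‖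
            ≤ ‖f0 - M‖ * ((1 + lam) ^ (n + 1) * Real.exp (-(c j * lam))) := by
          rw [mul_comm]
          apply mul_le_mul_of_nonneg_left _ (norm_nonneg _)
          calc Real.exp (-(c j * lam)) = 1 * Real.exp (-(c j * lam)) := (one_mul _).symm
            _ ≤ (1 + lam) ^ (n + 1) * Real.exp (-(c j * lam)) :=
                mul_le_mul_of_nonneg_right hp1 hE0
        have h2 : lam * (A * (C * ((1 + lam) ^ n * Real.exp (-(c j * lam)))))
            ≤ (C * A) * ((1 + lam) ^ (n + 1) * Real.exp (-(c j * lam))) := by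
          have hlp : lam * (1 + lam) ^ n ≤ (1 + lam) ^ (n + 1) := by
            rw [pow_succ]
            calc lam * (1 + lam) ^ n = (1 + lam) ^ n * lam := mul_comm _ _
              _ ≤ (1 + lam) ^ n * (1 + lam) :=
                  mul_le_mul_of_nonneg_left (by linarith) (by positivity)
          calc lam * (A * (C * ((1 + lam) ^ n * Real.exp (-(c j * lam)))))
              = (C * A) * ((lam * (1 + lam) ^ n) * Real.exp (-(c j * lam))) := by ring
            _ ≤ (C * A) * ((1 + lam) ^ (n + 1) * Real.exp (-(c j * lam))) := by
                apply mul_le_mul_of_nonneg_left _ (by positivity)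
                exact mul_le_mul_of_nonneg_right hlp hE0
        have hCX : (0 : ℝ) ≤ C * ((1 + lam) ^ (n + 1) * Real.exp (-(c j * lam))) := by
          positivity
        calc ‖F lam j - M‖
            ≤ ‖Real.exp (-(c j * lam)) • (f0 - M)‖ + ‖lam • ∑ k ∈ Finset.Iio j,
                (a j k * Real.exp (-(c j - c k) * lam)) • (μ⁻¹ • P (F lam k) - M)‖ := by
              rw [hsub]; exact norm_add_le _ _
          _ = Real.exp (-(c j * lam)) * ‖f0 - M‖ + lam * ‖∑ k ∈ Finset.Iio j,
                (a j k * Real.exp (-(c j - c k) * lam)) • (μ⁻¹ • P (F lam k) - M)‖ := by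
              rw [norm_smul, norm_smul, Real.norm_eq_abs, Real.abs_exp, Real.norm_eq_abs,
                abs_of_nonneg hlam]
          _ ≤ Real.exp (-(c j * lam)) * ‖f0 - M‖
                + lam * (A * (C * ((1 + lam) ^ n * Real.exp (-(c j * lam))))) := by
              exact add_le_add_right (mul_le_mul_of_nonneg_left hsum hlam) _
          _ ≤ ‖f0 - M‖ * ((1 + lam) ^ (n + 1) * Real.exp (-(c j * lam)))
                + (C * A) * ((1 + lam) ^ (n + 1) * Real.exp (-(c j * lam))) :=
              add_le_add h1 h2
          _ ≤ (C + (‖f0 - M‖ + C * A)) * ((1 + lam) ^ (n + 1) * Real.exp (-(c j * lam))) := by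
              rw [add_mul, add_mul]
              linarith [hCX]
  obtain ⟨C, hC0, hC⟩ := key ν
  constructor
  · intro i hi
    have hci : 0 < c i := by
      have := hcmono (show (⟨0, hν⟩ : Fin ν) < i by rw [Fin.lt_def]; simpa using hi)
      rwa [hcfirst] at this
    rw [tendsto_iff_norm_sub_tendsto_zero]
    apply squeeze_zero' (Eventually.of_forall fun _ => norm_nonneg _)
    · filter_upwards [eventually_ge_atTop (0 : ℝ)] with lam hlam
      exact hC i i.isLt.le lam hlam
    · have := (IF_aux_tendsto ν hci).const_mul C
      simpa using this
  · have hW0 : (0 : ℝ) ≤ ∑ i : Fin ν, |w i| := by positivity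
    have hf1b : ∀ lam : ℝ, 0 ≤ lam → ‖f1 lam - M‖
        ≤ (‖f0 - M‖ + (∑ i : Fin ν, |w i|) * C)
          * ((1 + lam) ^ (ν + 1) * Real.exp (-(1 * lam))) := by
      intro lam hlam
      have hE0 : (0 : ℝ) ≤ Real.exp (-(1 * lam)) := (Real.exp_pos _).le
      have h1lam : (1 : ℝ) ≤ 1 + lam := by linarith
      have hp1 : (1 : ℝ) ≤ (1 + lam) ^ (ν + 1) :=
        one_le_pow₀ h1lam
      have hsub : f1 lam - M = Real.exp (-lam) • (f0 - M)
          + lam • ∑ i, (w i * Real.exp (-(1 - c i) * lam)) • (μ⁻¹ • P (F lam i) - M) := by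
        rw [hf1 lam hlam, smul_sub, sub_smul, one_smul]
        abel
      have hterm : ∀ i ∈ Finset.univ (α := Fin ν),
          ‖(w i * Real.exp (-(1 - c i) * lam)) • (μ⁻¹ • P (F lam i) - M)‖
            ≤ |w i| * (C * ((1 + lam) ^ ν * Real.exp (-(1 * lam)))) := by
        intro i _
        have hFi : ‖F lam i - M‖ ≤ C * ((1 + lam) ^ ν * Real.exp (-(c i * lam))) :=
          hC i i.isLt.le lam hlam
        have hexp : Real.exp (-(1 - c i) * lam) * Real.exp (-(c i * lam))
            = Real.exp (-(1 * lam)) := by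
          rw [← Real.exp_add]; congr 1; ring
        calc ‖(w i * Real.exp (-(1 - c i) * lam)) • (μ⁻¹ • P (F lam i) - M)‖
            = |w i| * Real.exp (-(1 - c i) * lam) * ‖μ⁻¹ • P (F lam i) - M‖ := by
              rw [norm_smul, Real.norm_eq_abs, abs_mul, Real.abs_exp]
          _ ≤ |w i| * Real.exp (-(1 - c i) * lam)
                * (C * ((1 + lam) ^ ν * Real.exp (-(c i * lam)))) := by
              apply mul_le_mul_of_nonneg_left ((hPnorm _).trans hFi) (by positivity)
          _ = |w i| * (C * ((1 + lam) ^ ν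
                * (Real.exp (-(1 - c i) * lam) * Real.exp (-(c i * lam))))) := by ring
          _ = |w i| * (C * ((1 + lam) ^ ν * Real.exp (-(1 * lam)))) := by rw [hexp]
      have hsum : ‖∑ i, (w i * Real.exp (-(1 - c i) * lam)) • (μ⁻¹ • P (F lam i) - M)‖
          ≤ (∑ i : Fin ν, |w i|) * (C * ((1 + lam) ^ ν * Real.exp (-(1 * lam)))) := by
        calc ‖∑ i, (w i * Real.exp (-(1 - c i) * lam)) • (μ⁻¹ • P (F lam i) - M)‖
            ≤ ∑ i, ‖(w i * Real.exp (-(1 - c i) * lam)) • (μ⁻¹ • P (F lam i) - M)‖ :=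
              norm_sum_le _ _
          _ ≤ ∑ i, |w i| * (C * ((1 + lam) ^ ν * Real.exp (-(1 * lam)))) :=
              Finset.sum_le_sum hterm
          _ = (∑ i : Fin ν, |w i|) * (C * ((1 + lam) ^ ν * Real.exp (-(1 * lam)))) := by
              rw [Finset.sum_mul]
      have hX0 : (0 : ℝ) ≤ (1 + lam) ^ (ν + 1) * Real.exp (-(1 * lam)) := by positivity
      have hexplam : Real.exp (-lam) = Real.exp (-(1 * lam)) := by rw [one_mul]
      have h1 : Real.exp (-lam) * ‖f0 - M‖
          ≤ ‖f0 - M‖ * ((1 + lam) ^ (ν + 1) * Real.exp (-(1 * lam))) := by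
        rw [hexplam, mul_comm]
        apply mul_le_mul_of_nonneg_left _ (norm_nonneg _)
        calc Real.exp (-(1 * lam)) = 1 * Real.exp (-(1 * lam)) := (one_mul _).symm
          _ ≤ (1 + lam) ^ (ν + 1) * Real.exp (-(1 * lam)) :=
              mul_le_mul_of_nonneg_right hp1 hE0
      have h2 : lam * ((∑ i : Fin ν, |w i|) * (C * ((1 + lam) ^ ν * Real.exp (-(1 * lam)))))
          ≤ ((∑ i : Fin ν, |w i|) * C) * ((1 + lam) ^ (ν + 1) * Real.exp (-(1 * lam))) := by
        have hlp : lam * (1 + lam) ^ ν ≤ (1 + lam) ^ (ν + 1) := by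
          rw [pow_succ]
          calc lam * (1 + lam) ^ ν = (1 + lam) ^ ν * lam := mul_comm _ _
            _ ≤ (1 + lam) ^ ν * (1 + lam) :=
                mul_le_mul_of_nonneg_left (by linarith) (by positivity)
        calc lam * ((∑ i : Fin ν, |w i|) * (C * ((1 + lam) ^ ν * Real.exp (-(1 * lam)))))
            = ((∑ i : Fin ν, |w i|) * C)
                * ((lam * (1 + lam) ^ ν) * Real.exp (-(1 * lam))) := by ring
          _ ≤ ((∑ i : Fin ν, |w i|) * C) * ((1 + lam) ^ (ν + 1) * Real.exp (-(1 * lam))) := by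
              apply mul_le_mul_of_nonneg_left _ (by positivity)
              exact mul_le_mul_of_nonneg_right hlp hE0
      calc ‖f1 lam - M‖
          ≤ ‖Real.exp (-lam) • (f0 - M)‖ + ‖lam • ∑ i,
              (w i * Real.exp (-(1 - c i) * lam)) • (μ⁻¹ • P (F lam i) - M)‖ := by
            rw [hsub]; exact norm_add_le _ _
        _ = Real.exp (-lam) * ‖f0 - M‖ + lam * ‖∑ i,
              (w i * Real.exp (-(1 - c i) * lam)) • (μ⁻¹ • P (F lam i) - M)‖ := by
            rw [norm_smul, norm_smul, Real.norm_eq_abs, Real.abs_exp, Real.norm_eq_abs,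
              abs_of_nonneg hlam]
        _ ≤ Real.exp (-lam) * ‖f0 - M‖
              + lam * ((∑ i : Fin ν, |w i|)
                * (C * ((1 + lam) ^ ν * Real.exp (-(1 * lam))))) :=
            add_le_add_right (mul_le_mul_of_nonneg_left hsum hlam) _
        _ ≤ ‖f0 - M‖ * ((1 + lam) ^ (ν + 1) * Real.exp (-(1 * lam)))
              + ((∑ i : Fin ν, |w i|) * C) * ((1 + lam) ^ (ν + 1) * Real.exp (-(1 * lam))) :=
            add_le_add h1 h2
        _ = (‖f0 - M‖ + (∑ i : Fin ν, |w i|) * C)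
              * ((1 + lam) ^ (ν + 1) * Real.exp (-(1 * lam))) := by ring
    rw [tendsto_iff_norm_sub_tendsto_zero]
    apply squeeze_zero' (Eventually.of_forall fun _ => norm_nonneg _)
    · filter_upwards [eventually_ge_atTop (0 : ℝ)] with lam hlam
      exact hf1b lam hlam
    · have := (IF_aux_tendsto (ν + 1) (one_pos)).const_mul
        (‖f0 - M‖ + (∑ i : Fin ν, |w i|) * C)
      simpa using this
end

section
/- Let S be a set and E the space of real-valued functions on S with pointwise order. Consider the exponential Runge–Kutta scheme in E: F⁽ⁱ⁾ = e^{−c_iλ} f⁰ + λ ∑_{j<i} A_{ij}(λ)(𝒫(F⁽ʲ⁾)/μ − M) + (1 − e^{−c_iλ}) M for i = 1,…,ν and f¹ = e^{−λ} f⁰ + λ ∑_{i=1}^{ν} W_i(λ)(𝒫(F⁽ⁱ⁾)/μ − M) + (1 − e^{−λ}) M, with λ ≥ 0, μ > 0, c_i ≥ 0. Assume: A_{ij}(λ) ≥ 0 and W_i(λ) ≥ 0; λ ∑_{j<i} A_{ij}(λ) ≤ 1 − e^{−c_iλ} for each i; λ ∑_{i=1}^{ν} W_i(λ) ≤ 1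 − e^{−λ}; f⁰ ≥ 0 pointwise, M ≥ 0 pointwise, and 𝒫(g) ≥ 0 pointwise whenever g ≥ 0 pointwise. Then every stage satisfies F⁽ⁱ⁾ ≥ 0 pointwise and the update satisfies f¹ ≥ 0 pointwise. -/
/-- unconditional positivity of the exponential Runge–Kutta scheme
on the space of real-valued functions, under the convexity conditions
`λ ∑_{j<i} A_{ij}(λ) ≤ 1 - e^{-c_iλ}` and `λ ∑_i W_i(λ) ≤ 1 - e^{-λ}`. -/
theorem expRK_unconditional_positivity
    {S : Type*} (ν : ℕ) (hν : 1 ≤ ν) (lam : ℝ) (hlam : 0 ≤ lam)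
    (μ : ℝ) (hμ : 0 < μ) (c : Fin ν → ℝ) (hc : ∀ i, 0 ≤ c i)
    (A : Matrix (Fin ν) (Fin ν) ℝ) (W : Fin ν → ℝ)
    (hAnn : ∀ i j, 0 ≤ A i j) (hWnn : ∀ i, 0 ≤ W i)
    (hArow : ∀ i, lam * ∑ j ∈ Finset.Iio i, A i j ≤ 1 - Real.exp (-(c i * lam)))
    (hWsum : lam * ∑ i, W i ≤ 1 - Real.exp (-lam))
    (P : (S → ℝ) → (S → ℝ)) (hP : ∀ g : S → ℝ, (∀ x, 0 ≤ g x) → ∀ x, 0 ≤ P g x)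
    (M f0 : S → ℝ) (hM : ∀ x, 0 ≤ M x) (hf0 : ∀ x, 0 ≤ f0 x)
    (F : Fin ν → S → ℝ) (f1 : S → ℝ)
    (hF : ∀ i, F i = Real.exp (-(c i * lam)) • f0
      + lam • ∑ j ∈ Finset.Iio i, A i j • (μ⁻¹ • P (F j) - M)
      + (1 - Real.exp (-(c i * lam))) • M)
    (hf1 : f1 = Real.exp (-lam) • f0 + lam • ∑ i, W i • (μ⁻¹ • P (F i) - M)
      + (1 - Real.exp (-lam)) • M) :
    (∀ i x, 0 ≤ F i x) ∧ ∀ x, 0 ≤ f1 x := by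
  have key : ∀ i : Fin ν, (∀ j, j < i → ∀ x, 0 ≤ F j x) → ∀ x, 0 ≤ F i x := by
    intro i IH x
    have hval : F i x = Real.exp (-(c i * lam)) * f0 x
        + lam * ∑ j ∈ Finset.Iio i, A i j * (μ⁻¹ * P (F j) x)
        + (1 - Real.exp (-(c i * lam)) - lam * ∑ j ∈ Finset.Iio i, A i j) * M x := by
      rw [hF i]
      simp only [Pi.add_apply, Pi.smul_apply, Finset.sum_apply, Pi.sub_apply,
        smul_eq_mul]
      rw [Finset.sum_congr rfl (fun j _ => mul_sub (A i j) (μ⁻¹ * P (F j) x) (M x)),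
        Finset.sum_sub_distrib, ← Finset.sum_mul]
      ring
    rw [hval]
    have h1 : 0 ≤ Real.exp (-(c i * lam)) * f0 x :=
      mul_nonneg (Real.exp_nonneg _) (hf0 x)
    have h2 : 0 ≤ lam * ∑ j ∈ Finset.Iio i, A i j * (μ⁻¹ * P (F j) x) := by
      refine mul_nonneg hlam (Finset.sum_nonneg fun j hj => ?_)
      have hj' : j < i := Finset.mem_Iio.mp hj
      exact mul_nonneg (hAnn i j)
        (mul_nonneg (inv_nonneg.mpr hμ.le) (hP (F j) (IH j hj') x))
    have h3 : 0 ≤ (1 - Real.exp (-(c i * lam)) - lam * ∑ j ∈ Finset.Iio i, A i j) * M x :=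
      mul_nonneg (by linarith [hArow i]) (hM x)
    linarith
  have hFpos : ∀ i, ∀ x, 0 ≤ F i x := by
    have aux : ∀ n, ∀ i : Fin ν, (i : ℕ) ≤ n → ∀ x, 0 ≤ F i x := by
      intro n
      induction n with
      | zero => intro i hi; exact key i (fun j hj x => absurd (Fin.lt_def.mp hj) (by omega))
      | succ n IHn => intro i hi; exact key i (fun j hj x => IHn j (by omega) x)
    intro i; exact aux i i le_rfl
  refine ⟨hFpos, fun x => ?_⟩
  have hval : f1 x = Real.exp (-lam) * f0 x
      + lam * ∑ i, W i * (μ⁻¹ * P (F i) x)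
      + (1 - Real.exp (-lam) - lam * ∑ i, W i) * M x := by
    rw [hf1]
    simp only [Pi.add_apply, Pi.smul_apply, Finset.sum_apply, Pi.sub_apply, smul_eq_mul]
    rw [Finset.sum_congr rfl (fun i _ => mul_sub (W i) (μ⁻¹ * P (F i) x) (M x)),
      Finset.sum_sub_distrib, ← Finset.sum_mul]
    ring
  rw [hval]
  have h1 : 0 ≤ Real.exp (-lam) * f0 x := mul_nonneg (Real.exp_nonneg _) (hf0 x)
  have h2 : 0 ≤ lam * ∑ i, W i * (μ⁻¹ * P (F i) x) := by
    refine mul_nonneg hlam (Finset.sum_nonneg fun i _ => ?_)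
    exact mul_nonneg (hWnn i) (mul_nonneg (inv_nonneg.mpr hμ.le) (hP (F i) (hFpos i) x))
  have h3 : 0 ≤ (1 - Real.exp (-lam) - lam * ∑ i, W i) * M x :=
    mul_nonneg (by linarith) (hM x)
  linarith
end

section
/- Let V be a real vector space, S ⊆ V a convex set, and H : V → ℝ a function that is convex on S. Consider the exponential Runge–Kutta scheme F⁽ⁱ⁾ = e^{−c_iλ} f⁰ + λ ∑_{j<i} A_{ij}(λ)(𝒫(F⁽ʲ⁾)/μ − M) + (1 − e^{−c_iλ}) M for i = 1,…,ν and f¹ = e^{−λ} f⁰ + λ ∑_{i=1}^{ν} W_i(λ)(𝒫(F⁽ⁱ⁾)/μ − M) + (1 − e^{−λ}) M, with λ ≥ 0, μ > 0, c_i ≥ 0. Assume: A_{ij}(λ) ≥ 0, W_i(λ) ≥ 0, λ ∑_{j<i} A_{ij}(λ) ≤ 1 − e^{−c_iλ} for each i, λ ∑_{i=1}^{ν} W_i(λ) ≤ 1 − e^{−λ}; f⁰ ∈ S, M ∈ S; for every g ∈ S one has 𝒫(g)/μ ∈ S and H(𝒫(g)/μ) ≤ H(g); and H(M) ≤ H(f⁰).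 Then every stage satisfies F⁽ⁱ⁾ ∈ S with H(F⁽ⁱ⁾) ≤ H(f⁰), and the update satisfies f¹ ∈ S with H(f¹) ≤ H(f⁰). -/
lemma expRK_aux {V : Type*} [AddCommGroup V] [Module ℝ V]
    (S : Set V) (hS : Convex ℝ S) (H : V → ℝ) (hH : ConvexOn ℝ S H)
    {ι : Type*} (t : Finset ι) (g : ι → V) (h0 : ℝ)
    (hg : ∀ i ∈ t, g i ∈ S) (hgH : ∀ i ∈ t, H (g i) ≤ h0)
    (f0 M : V) (hf0 : f0 ∈ S) (hM : M ∈ S) (hHf0 : H f0 ≤ h0) (hHM : H M ≤ h0)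
    (a : ℝ) (ha : 0 ≤ a) (w : ι → ℝ) (hw : ∀ i ∈ t, 0 ≤ w i)
    (hsum : a + ∑ i ∈ t, w i ≤ 1) :
    (a • f0 + ∑ i ∈ t, w i • g i + (1 - a - ∑ i ∈ t, w i) • M ∈ S) ∧
    H (a • f0 + ∑ i ∈ t, w i • g i + (1 - a - ∑ i ∈ t, w i) • M) ≤ h0 := by
  classical
  set b : ℝ := 1 - a - ∑ i ∈ t, w i with hb
  have hwnn : 0 ≤ ∑ i ∈ t, w i := Finset.sum_nonneg hw
  have hbnn : 0 ≤ b := by simp [hb]; linarith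
  -- combined index type
  set t' : Finset (ι ⊕ Bool) := t.disjSum Finset.univ with ht'
  set w' : ι ⊕ Bool → ℝ := Sum.elim w (fun x => if x then a else b) with hw'
  set p' : ι ⊕ Bool → V := Sum.elim g (fun x => if x then f0 else M) with hp'
  have hwnn' : ∀ x ∈ t', 0 ≤ w' x := by
    rintro (i | x) hx
    · exact hw i (by simpa [ht'] using hx)
    · cases x <;> simpa [hw'] using (by assumption)
  have hsum1 : ∑ x ∈ t', w' x = 1 := by
    simp [ht', hw', Finset.sum_disjSum, hb]
    ring
  have hmem : ∀ x ∈ t', p' x ∈ S := by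
    rintro (i | x) hx
    · exact hg i (by simpa [ht'] using hx)
    · cases x <;> simpa [hp'] using (by assumption)
  have hrew : ∑ x ∈ t', w' x • p' x
      = a • f0 + ∑ i ∈ t, w i • g i + b • M := by
    simp [ht', hw', hp', Finset.sum_disjSum]
    abel
  constructor
  · rw [← hrew]; exact hS.sum_mem hwnn' hsum1 hmem
  · rw [← hrew]
    calc H (∑ x ∈ t', w' x • p' x) ≤ ∑ x ∈ t', w' x • H (p' x) :=
          hH.map_sum_le hwnn' hsum1 hmem
      _ ≤ ∑ x ∈ t', w' x * h0 := by
          refine Finset.sum_le_sum ?_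
          rintro (i | x) hx
          · exact mul_le_mul_of_nonneg_left (hgH i (by simpa [ht'] using hx))
              (hw i (by simpa [ht'] using hx))
          · cases x <;> simp [hw', hp'] <;> nlinarith [hwnn' _ hx]
      _ = h0 := by rw [← Finset.sum_mul, hsum1, one_mul]

/-- unconditional entropic stability of the exponential Runge–Kutta
scheme: under the convexity conditions on the coefficients, if `S` is convex,
`H` is convex on `S`, `𝒫(g)/μ ∈ S` with `H(𝒫(g)/μ) ≤ H(g)` for `g ∈ S`, and
`H(M) ≤ H(f⁰)`, then all stages and the update stay in `S` with entropy `≤ H(f⁰)`. -/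
theorem expRK_unconditional_entropy
    {V : Type*} [AddCommGroup V] [Module ℝ V]
    (S : Set V) (hS : Convex ℝ S) (H : V → ℝ) (hH : ConvexOn ℝ S H)
    (ν : ℕ) (hν : 1 ≤ ν) (lam : ℝ) (hlam : 0 ≤ lam)
    (μ : ℝ) (hμ : 0 < μ) (c : Fin ν → ℝ) (hc : ∀ i, 0 ≤ c i)
    (A : Matrix (Fin ν) (Fin ν) ℝ) (W : Fin ν → ℝ)
    (hAnn : ∀ i j, 0 ≤ A i j) (hWnn : ∀ i, 0 ≤ W i)
    (hArow : ∀ i, lam * ∑ j ∈ Finset.Iio i, A i j ≤ 1 - Real.exp (-(c i * lam)))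
    (hWsum : lam * ∑ i, W i ≤ 1 - Real.exp (-lam))
    (P : V → V) (M f0 : V) (hf0S : f0 ∈ S) (hMS : M ∈ S)
    (hPS : ∀ g ∈ S, μ⁻¹ • P g ∈ S)
    (hPH : ∀ g ∈ S, H (μ⁻¹ • P g) ≤ H g)
    (hHM : H M ≤ H f0)
    (F : Fin ν → V) (f1 : V)
    (hF : ∀ i, F i = Real.exp (-(c i * lam)) • f0
      + lam • ∑ j ∈ Finset.Iio i, A i j • (μ⁻¹ • P (F j) - M)
      + (1 - Real.exp (-(c i * lam))) • M)
    (hf1 : f1 = Real.exp (-lam) • f0 + lam • ∑ i, W i • (μ⁻¹ • P (F i) - M)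
      + (1 - Real.exp (-lam)) • M) :
    (∀ i, F i ∈ S ∧ H (F i) ≤ H f0) ∧ (f1 ∈ S ∧ H f1 ≤ H f0) := by
  have key : ∀ (t : Finset (Fin ν)) (a : ℝ) (u : Fin ν → ℝ) (x : V),
      x = a • f0 + lam • ∑ j ∈ t, u j • (μ⁻¹ • P (F j) - M) + (1 - a) • M →
      x = a • f0 + ∑ j ∈ t, (lam * u j) • (μ⁻¹ • P (F j))
        + (1 - a - ∑ j ∈ t, lam * u j) • M := by
    intro t a u x hx
    rw [hx, Finset.smul_sum]
    simp only [smul_sub, smul_smul, Finset.sum_sub_distrib, ← Finset.sum_smul, sub_smul,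
      mul_assoc]
    abel
  have main' : ∀ n : ℕ, ∀ i : Fin ν, (i : ℕ) < n → F i ∈ S ∧ H (F i) ≤ H f0 := by
    intro n
    induction n with
    | zero => intro i hi; omega
    | succ n ihn =>
      intro i hi
      have ih : ∀ j : Fin ν, j < i → F j ∈ S ∧ H (F j) ≤ H f0 := fun j hj =>
        ihn j (by omega)
      have heq := key (Finset.Iio i) _ _ _ (hF i)
      rw [heq]
      refine expRK_aux S hS H hH _ _ _ ?_ ?_ f0 M hf0S hMS le_rfl hHM _
        (Real.exp_nonneg _) _ ?_ ?_
      · intro j hj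
        exact hPS _ (ih j (Finset.mem_Iio.mp hj)).1
      · intro j hj
        exact le_trans (hPH _ (ih j (Finset.mem_Iio.mp hj)).1)
          (ih j (Finset.mem_Iio.mp hj)).2
      · intro j _; exact mul_nonneg hlam (hAnn i j)
      · rw [← Finset.mul_sum]
        linarith [hArow i]
  have main : ∀ i : Fin ν, F i ∈ S ∧ H (F i) ≤ H f0 := fun i => main' ν i i.isLt
  refine ⟨main, ?_⟩
  have heq := key Finset.univ _ _ _ hf1
  rw [heq]
  refine expRK_aux S hS H hH _ _ _ ?_ ?_ f0 M hf0S hMS le_rfl hHM _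
    (Real.exp_nonneg _) _ ?_ ?_
  · intro j _; exact hPS _ (main j).1
  · intro j _; exact le_trans (hPH _ (main j).1) (main j).2
  · intro j _; exact mul_nonneg hlam (hWnn j)
  · rw [← Finset.mul_sum]
    linarith [hWsum]
end

section
/- Let s ≥ 1, let a_1, …, a_s ≥ 0 and c_1, …, c_s ≥ 0 be real numbers, and let c > 0. If ∑_{j=1}^{s} a_j c_j^k ≤ c^{k+1}/(k+1) for every integer k ≥ 0, then for every λ > 0 one has ∑_{j=1}^{s} a_j e^{c_j λ} ≤ (e^{cλ} − 1)/λ. In particular, taking c = 1: if w_1, …, w_s ≥ 0 and c_1, …, c_s ≥ 0 satisfy ∑_i w_i c_i^k ≤ 1/(k+1) for all k ≥ 0, then ∑_i w_i e^{c_i λ} ≤ (e^{λ} − 1)/λ for all λ > 0. -/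
open Finset in
lemma main_aux (s : ℕ) (a c : Fin s → ℝ)
    (ha : ∀ j, 0 ≤ a j) (hc : ∀ j, 0 ≤ c j) (C : ℝ) (hC : 0 < C)
    (h : ∀ k : ℕ, ∑ j, a j * c j ^ k ≤ C ^ (k + 1) / ((k : ℝ) + 1))
    (lam : ℝ) (hlam : 0 < lam) :
    ∑ j, a j * Real.exp (c j * lam) ≤ (Real.exp (C * lam) - 1) / lam := by
  have hexp : ∀ x : ℝ, Real.exp x = ∑' n : ℕ, x ^ n / n.factorial := by
    intro x
    rw [Real.exp_eq_exp_ℝ, NormedSpace.exp_eq_tsum_div]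
  have hsum : ∀ x : ℝ, Summable (fun n : ℕ => x ^ n / n.factorial) :=
    Real.summable_pow_div_factorial
  -- RHS computation
  have hRsum : Summable (fun k : ℕ => (C * lam) ^ (k + 1) / ((k + 1).factorial * lam)) := by
    have := ((hsum (C * lam)).comp_injective (add_left_injective 1)).div_const lam
    simpa [Function.comp, div_div] using this
  have hR : (Real.exp (C * lam) - 1) / lam
      = ∑' k : ℕ, (C * lam) ^ (k + 1) / ((k + 1).factorial * lam) := by
    have h1 : Real.exp (C * lam) = 1 + ∑' k : ℕ, (C * lam) ^ (k + 1) / (k + 1).factorial := by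
      rw [hexp (C * lam), Summable.tsum_eq_zero_add (hsum (C * lam))]
      simp
    rw [h1]
    rw [show (1 : ℝ) + (∑' k : ℕ, (C * lam) ^ (k + 1) / (k + 1).factorial) - 1
        = ∑' k : ℕ, (C * lam) ^ (k + 1) / (k + 1).factorial by ring]
    rw [← tsum_div_const]
    exact tsum_congr fun k => by rw [div_div]
  -- LHS computation
  have hL : ∑ j, a j * Real.exp (c j * lam)
      = ∑' k : ℕ, ∑ j, a j * ((c j * lam) ^ k / k.factorial) := by
    rw [Summable.tsum_finsetSum (fun j _ => (hsum (c j * lam)).mul_left (a j))]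
    congr 1; funext j
    rw [hexp (c j * lam), tsum_mul_left]
  rw [hL, hR]
  apply Summable.tsum_le_tsum _ (summable_sum fun j _ => (hsum (c j * lam)).mul_left (a j)) hRsum
  intro k
  have key : ∑ j, a j * ((c j * lam) ^ k / k.factorial)
      = (lam ^ k / k.factorial) * ∑ j, a j * c j ^ k := by
    rw [Finset.mul_sum]
    exact Finset.sum_congr rfl fun j _ => by rw [mul_pow]; ring
  rw [key]
  have hfac : ((k + 1).factorial : ℝ) = (k + 1) * k.factorial := by
    rw [Nat.factorial_succ]; push_cast; ring
  have hbound := h k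
  have hpos : (0:ℝ) < lam ^ k / k.factorial := by positivity
  calc (lam ^ k / k.factorial) * ∑ j, a j * c j ^ k
      ≤ (lam ^ k / k.factorial) * (C ^ (k + 1) / ((k : ℝ) + 1)) := by
        exact mul_le_mul_of_nonneg_left hbound hpos.le
    _ = (C * lam) ^ (k + 1) / ((k + 1).factorial * lam) := by
        rw [hfac, mul_pow]
        field_simp
        ring

/-- if `∑_j a_j c_j^k ≤ C^{k+1}/(k+1)` for all `k ≥ 0` then
`∑_j a_j e^{c_j λ} ≤ (e^{Cλ} - 1)/λ` for all `λ > 0`; in particular (`C = 1`)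
`∑_i w_i c_i^k ≤ 1/(k+1)` implies `∑_i w_i e^{c_i λ} ≤ (e^λ - 1)/λ`. -/
theorem taylor_coefficient_convexity_criterion
    (s : ℕ) (hs : 1 ≤ s) (a c : Fin s → ℝ)
    (ha : ∀ j, 0 ≤ a j) (hc : ∀ j, 0 ≤ c j) (C : ℝ) (hC : 0 < C)
    (h : ∀ k : ℕ, ∑ j, a j * c j ^ k ≤ C ^ (k + 1) / ((k : ℝ) + 1)) :
    (∀ lam : ℝ, 0 < lam →
      ∑ j, a j * Real.exp (c j * lam) ≤ (Real.exp (C * lam) - 1) / lam) ∧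
    (∀ w cv : Fin s → ℝ, (∀ i, 0 ≤ w i) → (∀ i, 0 ≤ cv i) →
      (∀ k : ℕ, ∑ i, w i * cv i ^ k ≤ 1 / ((k : ℝ) + 1)) →
      ∀ lam : ℝ, 0 < lam →
        ∑ i, w i * Real.exp (cv i * lam) ≤ (Real.exp lam - 1) / lam) := by
  constructor
  · exact main_aux s a c ha hc C hC h
  · intro w cv hw hcv hwk lam hlam
    have := main_aux s w cv hw hcv 1 one_pos (by simpa using hwk) lam hlam
    simpa using this
end

section
/- Let w ∈ (0,1] be a real number. Then the inequalities w^{k−1} ≥ (k+1)/2^k hold for every integer k ≥ 0 if and only if w ≥ 3/4. -/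
lemma aux_growth (n : ℕ) : (n : ℝ) + 2 ≤ 2 * (3/2) ^ n := by
  induction n with
  | zero => norm_num
  | succ n ih =>
    have hn : (0:ℝ) ≤ n := Nat.cast_nonneg n
    push_cast
    calc (n:ℝ) + 1 + 2 ≤ (3/2) * ((n:ℝ) + 2) := by linarith
      _ ≤ (3/2) * (2 * (3/2)^n) := by linarith
      _ = 2 * (3/2)^(n+1) := by ring

/-- for `w ∈ (0,1]`, the inequalities `w^{k-1} ≥ (k+1)/2^k` hold for
every integer `k ≥ 0` if and only if `w ≥ 3/4`. -/
theorem midpoint_family_convexity_iff (w : ℝ) (hw : w ∈ Set.Ioc (0 : ℝ) 1) :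
    (∀ k : ℕ, ((k : ℝ) + 1) / 2 ^ k ≤ w ^ ((k : ℤ) - 1)) ↔ 3 / 4 ≤ w := by
  obtain ⟨hw0, hw1⟩ := hw
  constructor
  · intro h
    have h2 := h 2
    norm_num at h2
    simpa using h2
  · intro h34 k
    cases k with
    | zero =>
      have : w ^ ((0:ℤ) - 1) = w⁻¹ := by norm_num
      simp only [Nat.cast_zero, pow_zero, this]
      rw [le_inv_comm₀ (by norm_num) (by positivity)]
      simpa using hw1
    | succ n =>
      have hcast : ((n.succ : ℕ) : ℤ) - 1 = (n : ℤ) := by push_cast; ring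
      rw [hcast, zpow_natCast]
      have h1 : ((3:ℝ)/4)^n ≤ w^n := pow_le_pow_left₀ (by norm_num) h34 n
      have hb : (0:ℝ) < 2 ^ (n+1) := by positivity
      rw [div_le_iff₀ hb]
      have key : ((3:ℝ)/4)^n * 2^(n+1) = 2 * (3/2)^n := by
        have h4 : (4:ℝ)^n = 2^n * 2^n := by
          rw [show (4:ℝ) = 2*2 by norm_num, mul_pow]
        rw [pow_succ, div_pow, div_pow, h4]
        field_simp
      calc ((n.succ : ℕ) : ℝ) + 1 = (n : ℝ) + 2 := by push_cast; ring
        _ ≤ 2 * (3/2)^n := aux_growth n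
        _ = (3/4:ℝ)^n * 2^(n+1) := key.symm
        _ ≤ w^n * 2^(n+1) := by
            apply mul_le_mul_of_nonneg_right h1 (le_of_lt hb)
end

section
/- Let λ ≥ 0 and λ_p ≥ 0 be real numbers. Then (|1 + λ − λ_p| + λ_p) e^{−λ} ≤ 1 if and only if 2λ_p ≤ λ + 1 + e^{λ}. -/
/-- contraction factor of the penalized first order IF scheme:
for `λ ≥ 0`, `λ_p ≥ 0`, `(|1 + λ - λ_p| + λ_p) e^{-λ} ≤ 1 ↔ 2λ_p ≤ λ + 1 + e^λ`. -/
theorem first_order_IF_penalized_contractivity_iff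
    (lam lamp : ℝ) (hlam : 0 ≤ lam) (hlamp : 0 ≤ lamp) :
    (|1 + lam - lamp| + lamp) * Real.exp (-lam) ≤ 1 ↔
      2 * lamp ≤ lam + 1 + Real.exp lam := by
  have hexp : lam + 1 ≤ Real.exp lam := Real.add_one_le_exp lam
  have hpos : 0 < Real.exp lam := Real.exp_pos lam
  have hneg : Real.exp (-lam) = (Real.exp lam)⁻¹ := Real.exp_neg lam
  rcases le_or_gt lamp (1 + lam) with h | h
  · rw [abs_of_nonneg (by linarith)]
    constructor
    · intro _; linarith
    · intro _
      rw [hneg]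
      rw [mul_inv_le_iff₀ hpos, one_mul]
      linarith
  · rw [abs_of_neg (by linarith)]
    rw [hneg, mul_inv_le_iff₀ hpos, one_mul]
    constructor <;> intro <;> linarith
end
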